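/- arXiv:1909.04649 — 10 statements merged into one kernel-verified Lean document; each statement's English description precedes it below -/
import Mathlib

section
/- Let H be a bipartite graph with parts U and W, and let g ∈ ℕ. Then H has girth at least 2g+2 if and only if for every subset {u₁,…,u_j} ⊆ U with j ≤ g, the union of neighborhoods satisfies |N(u₁) ∪ ⋯ ∪ N(u_j)| ≥ (∑_{i=1}^{j} |N(u_i)|) − (j−1). -/
open Finset

/-- One step of the `r`-neighbour bootstrap process: add every vertex having
at least `r` infected neighbours. -/
def bootStep {V : Type*} [Fintype V] [DecidableEq V] (G : SimpleGraph V)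
    [DecidableRel G.Adj] (r : ℕ) (A : Finset V) : Finset V :=
  A ∪ Finset.univ.filter fun v => r ≤ ((G.neighborFinset v) ∩ A).card

/-- `A₀` percolates if iterating the bootstrap step eventually infects every vertex. -/
def percolates {V : Type*} [Fintype V] [DecidableEq V] (G : SimpleGraph V)
    [DecidableRel G.Adj] (r : ℕ) (A₀ : Finset V) : Prop :=
  ∃ t : ℕ, (bootStep G r)^[t] A₀ = Finset.univ

/-- The closure of `A₀` under the bootstrap process (iterating `card V` times
reaches the fixed point). -/
def bootClosure {V : Type*} [Fintype V] [DecidableEq V] (G : SimpleGraph V)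
    [DecidableRel G.Adj] (r : ℕ) (A₀ : Finset V) : Finset V :=
  (bootStep G r)^[Fintype.card V] A₀

/-- `f k = ⌊√(2k + 0.25) + 2.5⌋`. -/
noncomputable def f (k : ℕ) : ℕ := ⌊Real.sqrt (2 * (k : ℝ) + 0.25) + 2.5⌋₊

open SimpleGraph


/-- Parity/alternation counting along a walk, for a predicate that flips
across every edge. -/
lemma walk_alt_count {V : Type*} {G : SimpleGraph V} (P : V → Prop) [DecidablePred P]
    (hP : ∀ {x y}, G.Adj x y → (P x ↔ ¬ P y)) :
    ∀ {x y : V} (p : G.Walk x y),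
      2 * (p.support.tail.countP (fun v => decide (P v))) + (if P x then 1 else 0)
        = p.length + (if P y then 1 else 0) := by
  intro x y p
  induction p with
  | nil => simp
  | @cons x z y h q ih =>
    have hxz := hP h
    rw [SimpleGraph.Walk.support_cons, List.tail_cons, q.support_eq_cons,
      List.countP_cons, SimpleGraph.Walk.length_cons]
    by_cases hx : P x <;> by_cases hz : P z <;>
      simp [hx, hz] at hxz ih ⊢ <;> omega

lemma acyclic_card_edge_lt {V : Type*} [Fintype V] [DecidableEq V]
    (G : SimpleGraph V) [DecidableRel G.Adj] (hG : G.IsAcyclic)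
    (hpos : 0 < G.edgeFinset.card) :
    G.edgeFinset.card < (Finset.univ.filter fun v => 0 < G.degree v).card := by
  classical
  -- root of the connected component
  set R : V → V := fun v => (G.connectedComponentMk v).out with hR
  have hreach : ∀ v, G.Reachable v (R v) := by
    intro v
    have : G.connectedComponentMk ((G.connectedComponentMk v).out) = G.connectedComponentMk v :=
      (G.connectedComponentMk v).out_eq
    exact (SimpleGraph.ConnectedComponent.eq.mp this).symm
  have hRcongr : ∀ {x y : V}, G.Reachable x y → R x = R y := by
    intro x y hxy
    exact congrArg Quot.out (SimpleGraph.ConnectedComponent.sound hxy)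
  set d : V → ℕ := fun v => G.dist v (R v) with hd
  have hRR : ∀ v, R (R v) = R v := fun v => hRcongr (hreach v).symm
  -- choose shortest paths to the roots
  have hex : ∀ v, ∃ p : G.Walk v (R v), p.IsPath ∧ p.length = G.dist v (R v) :=
    fun v => (hreach v).exists_path_of_dist
  set pth : ∀ v, G.Walk v (R v) := fun v => (hex v).choose with hpth
  have hpath : ∀ v, (pth v).IsPath := fun v => (hex v).choose_spec.1
  have hlen : ∀ v, (pth v).length = d v := fun v => (hex v).choose_spec.2
  -- distances of interior vertices of a shortest path
  have hsupp : ∀ v w (hw : w ∈ (pth v).support), w ≠ v → G.dist w (R v) + 1 ≤ d v := by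
    intro v w hw hne
    have hsplit := congrArg SimpleGraph.Walk.length ((pth v).take_spec hw)
    rw [SimpleGraph.Walk.length_append, hlen v] at hsplit
    have h1 : 1 ≤ ((pth v).takeUntil w hw).length := by
      by_contra hc
      push_neg at hc
      exact hne (SimpleGraph.Walk.eq_of_length_eq_zero (Nat.lt_one_iff.mp hc)).symm
    have h2 : G.dist w (R v) ≤ ((pth v).dropUntil w hw).length :=
      SimpleGraph.dist_le _
    omega
  have hRw : ∀ v w, w ∈ (pth v).support → R w = R v := by
    intro v w hw
    exact (hRcongr ⟨(pth v).takeUntil w hw⟩).symm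
  -- adjacent vertices have distances differing by exactly one
  have hKadj : ∀ a b, G.Adj a b → d b = d a + 1 ∨ d a = d b + 1 := by
    intro a b hab
    have hRab : R a = R b := hRcongr hab.reachable
    have h1 : d a ≤ d b + 1 := by
      have := SimpleGraph.dist_le (SimpleGraph.Walk.cons hab (pth b))
      rw [SimpleGraph.Walk.length_cons, hlen b] at this
      calc d a = G.dist a (R b) := by show G.dist a (R a) = _; rw [hRab]
        _ ≤ d b + 1 := this
    have h2 : d b ≤ d a + 1 := by
      have := SimpleGraph.dist_le (SimpleGraph.Walk.cons hab.symm (pth a))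
      rw [SimpleGraph.Walk.length_cons, hlen a] at this
      calc d b = G.dist b (R a) := by show G.dist b (R b) = _; rw [hRab]
        _ ≤ d a + 1 := this
    have hne : d a ≠ d b := by
      intro he
      by_cases hmem : a ∈ (pth b).support
      · have := hsupp b a hmem hab.ne
        rw [← hRab] at this
        change d a + 1 ≤ d b at this
        omega
      · have hq : (SimpleGraph.Walk.cons hab (pth b)).IsPath :=
          (SimpleGraph.Walk.cons_isPath_iff _ _).mpr ⟨hpath b, hmem⟩
        have hpa : ((pth a).copy rfl hRab).IsPath := by
          rw [SimpleGraph.Walk.isPath_copy]; exact hpath a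
        have := hG.path_unique ⟨(pth a).copy rfl hRab, hpa⟩ ⟨_, hq⟩
        have hlq := congrArg (fun p : G.Path a (R b) => p.1.length) this
        simp only [SimpleGraph.Walk.length_copy, SimpleGraph.Walk.length_cons,
          hlen a, hlen b] at hlq
        omega
    omega
  -- a default element
  obtain ⟨e0, he0⟩ := Finset.card_pos.mp hpos
  haveI : Inhabited V := ⟨(Quot.out e0).1⟩
  -- the first edge of the shortest path, as a function of the endpoint
  set hfun : V → Sym2 V := fun v => s(v, (pth v).support.tail.headI) with hhfun
  have himg : ∀ a b, G.Adj a b → d b = d a + 1 → hfun b = s(a, b) := by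
    intro a b hab hdb
    have hRab : R a = R b := hRcongr hab.reachable
    have hbm : b ∉ (pth a).support := by
      intro hm
      have h1 := hsupp a b hm hab.ne'
      have h2 : G.dist b (R a) = d b := by rw [hRab]
      omega
    have hqp : ((SimpleGraph.Walk.cons hab.symm (pth a)).copy rfl hRab).IsPath := by
      rw [SimpleGraph.Walk.isPath_copy]
      exact (SimpleGraph.Walk.cons_isPath_iff _ _).mpr ⟨hpath a, hbm⟩
    have hequ : pth b = (SimpleGraph.Walk.cons hab.symm (pth a)).copy rfl hRab := by
      have := hG.path_unique ⟨pth b, hpath b⟩ ⟨_, hqp⟩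
      exact congrArg Subtype.val this
    show s(b, (pth b).support.tail.headI) = s(a, b)
    rw [hequ, SimpleGraph.Walk.support_copy, SimpleGraph.Walk.support_cons,
      List.tail_cons, (pth a).support_eq_cons, List.headI_cons, Sym2.eq_swap]
  set F : Finset V := Finset.univ.filter (fun v => 0 < d v ∧ 0 < G.degree v) with hF
  have hsub : G.edgeFinset ⊆ F.image hfun := by
    intro e he
    induction e using Sym2.ind with
    | _ x y =>
      have hadj : G.Adj x y := (SimpleGraph.mem_edgeSet G).mp (SimpleGraph.mem_edgeFinset.mp he)
      rcases hKadj x y hadj with h | h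
      · refine Finset.mem_image.mpr ⟨y, ?_, himg x y hadj h⟩
        refine Finset.mem_filter.mpr ⟨Finset.mem_univ _, by omega, ?_⟩
        exact (SimpleGraph.degree_pos_iff_exists_adj _ _).mpr ⟨x, hadj.symm⟩
      · rw [Sym2.eq_swap]
        refine Finset.mem_image.mpr ⟨x, ?_, himg y x hadj.symm h⟩
        refine Finset.mem_filter.mpr ⟨Finset.mem_univ _, by omega, ?_⟩
        exact (SimpleGraph.degree_pos_iff_exists_adj _ _).mpr ⟨y, hadj⟩
  -- some root, which has distance 0
  have hFne : F.Nonempty := by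
    rcases Finset.mem_image.mp (hsub he0) with ⟨v, hv, -⟩
    exact ⟨v, hv⟩
  obtain ⟨v0, hv0⟩ := hFne
  rw [hF, Finset.mem_filter] at hv0
  set r0 := R v0 with hr0
  have hdr0 : d r0 = 0 := by
    show G.dist (R v0) (R (R v0)) = 0
    rw [hRR]
    exact SimpleGraph.dist_self
  have hdegr0 : 0 < G.degree r0 := by
    by_cases hrv : r0 = v0
    · rw [hrv]; exact hv0.2.2
    · have hreach0 : G.Reachable r0 v0 := (hreach v0).symm
      have hdist : G.dist r0 v0 ≠ 0 :=
        SimpleGraph.dist_ne_zero_iff_ne_and_reachable.mpr ⟨hrv, hreach0⟩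
      obtain ⟨p, hp⟩ := SimpleGraph.exists_walk_of_dist_ne_zero hdist
      have hlp : 0 < p.length := by
        rcases Nat.eq_zero_or_pos p.length with h | h
        · exact absurd (SimpleGraph.Walk.eq_of_length_eq_zero h) hrv
        · exact h
      have hadj := p.adj_getVert_succ hlp
      rw [SimpleGraph.Walk.getVert_zero] at hadj
      exact (SimpleGraph.degree_pos_iff_exists_adj _ _).mpr ⟨_, hadj⟩
  have hr0M : r0 ∈ Finset.univ.filter (fun v => 0 < G.degree v) :=
    Finset.mem_filter.mpr ⟨Finset.mem_univ _, hdegr0⟩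
  have hFsub : F ⊆ (Finset.univ.filter (fun v => 0 < G.degree v)).erase r0 := by
    intro v hv
    rw [hF, Finset.mem_filter] at hv
    refine Finset.mem_erase.mpr ⟨?_, Finset.mem_filter.mpr ⟨Finset.mem_univ _, hv.2.2⟩⟩
    intro hvr
    rw [hvr] at hv
    omega
  calc G.edgeFinset.card ≤ (F.image hfun).card := Finset.card_le_card hsub
    _ ≤ F.card := Finset.card_image_le
    _ ≤ ((Finset.univ.filter (fun v => 0 < G.degree v)).erase r0).card :=
        Finset.card_le_card hFsub
    _ < (Finset.univ.filter (fun v => 0 < G.degree v)).card :=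
        Finset.card_erase_lt_of_mem hr0M

/-- The subgraph of `H` consisting of edges with an endpoint in `S`. -/
def incGraph {V : Type*} [DecidableEq V] (H : SimpleGraph V) (S : Finset V) :
    SimpleGraph V where
  Adj x y := H.Adj x y ∧ (x ∈ S ∨ y ∈ S)
  symm := ⟨fun x y ⟨h, ho⟩ => ⟨h.symm, ho.symm⟩⟩
  loopless := ⟨fun v hv => H.loopless.irrefl v hv.1⟩

instance incGraph_decidableAdj {V : Type*} [DecidableEq V] (H : SimpleGraph V)
    [DecidableRel H.Adj] (S : Finset V) : DecidableRel (incGraph H S).Adj :=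
  fun a b => inferInstanceAs (Decidable (H.Adj a b ∧ (a ∈ S ∨ b ∈ S)))

lemma incGraph_adj {V : Type*} [DecidableEq V] {H : SimpleGraph V} {S : Finset V}
    {x y : V} : (incGraph H S).Adj x y ↔ H.Adj x y ∧ (x ∈ S ∨ y ∈ S) := Iff.rfl

lemma incGraph_edgeFinset {V : Type*} [Fintype V] [DecidableEq V]
    (H : SimpleGraph V) [DecidableRel H.Adj] (S : Finset V)
    (hSS : ∀ x y, x ∈ S → y ∈ S → ¬ H.Adj x y) :
    (incGraph H S).edgeFinset
      = S.biUnion (fun u => (H.neighborFinset u).image fun w => s(u, w)) := by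
  ext e
  induction e using Sym2.ind with
  | _ x y =>
    simp only [SimpleGraph.mem_edgeFinset, SimpleGraph.mem_edgeSet, Finset.mem_biUnion,
      Finset.mem_image, SimpleGraph.mem_neighborFinset]
    constructor
    · rintro ⟨hadj, hx | hy⟩
      · exact ⟨x, hx, y, hadj, rfl⟩
      · exact ⟨y, hy, x, hadj.symm, Sym2.eq_swap⟩
    · rintro ⟨u, hu, w, hadj, he⟩
      rcases Sym2.eq_iff.mp he.symm with ⟨hxu, hyw⟩ | ⟨hxw, hyu⟩
      · subst hxu; subst hyw; exact ⟨hadj, Or.inl hu⟩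
      · subst hxw; subst hyu; exact ⟨hadj.symm, Or.inr hu⟩

lemma incGraph_card_edgeFinset {V : Type*} [Fintype V] [DecidableEq V]
    (H : SimpleGraph V) [DecidableRel H.Adj] (S : Finset V)
    (hSS : ∀ x y, x ∈ S → y ∈ S → ¬ H.Adj x y) :
    (incGraph H S).edgeFinset.card = ∑ u ∈ S, (H.neighborFinset u).card := by
  rw [incGraph_edgeFinset H S hSS, Finset.card_biUnion]
  · refine Finset.sum_congr rfl fun u hu => ?_
    apply Finset.card_image_of_injective
    intro a b hab
    exact Sym2.congr_right.mp hab
  · intro u hu u' hu' hne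
    simp only [Finset.disjoint_left]
    intro e he he'
    rcases Finset.mem_image.mp he with ⟨w, hw, rfl⟩
    rcases Finset.mem_image.mp he' with ⟨w', hw', he2⟩
    rcases Sym2.eq_iff.mp he2 with ⟨h1, h2⟩ | ⟨h1, h2⟩
    · exact hne h1.symm
    · have hadj : H.Adj u w := (SimpleGraph.mem_neighborFinset _ _ _).mp hw
      rw [← h1] at hadj
      exact hSS u u' hu hu' hadj

/-- Double counting of edges between `S` and the union of its neighbourhoods. -/
lemma sum_deg_eq_sum_inter {V : Type*} [Fintype V] [DecidableEq V]
    (H : SimpleGraph V) [DecidableRel H.Adj] (S : Finset V) :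
    ∑ u ∈ S, (H.neighborFinset u).card
      = ∑ w ∈ S.biUnion (fun u => H.neighborFinset u),
          ((H.neighborFinset w) ∩ S).card := by
  set T := S.biUnion (fun u => H.neighborFinset u) with hT
  have h1 : ∀ u ∈ S, H.neighborFinset u = T.filter (fun w => H.Adj u w) := by
    intro u hu
    ext w
    simp only [SimpleGraph.mem_neighborFinset, Finset.mem_filter, hT, Finset.mem_biUnion]
    exact ⟨fun h => ⟨⟨u, hu, h⟩, h⟩, fun h => h.2⟩
  have h2 : ∀ w : V, (H.neighborFinset w) ∩ S = S.filter (fun u => H.Adj u w) := by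
    intro w
    ext u
    simp only [Finset.mem_inter, SimpleGraph.mem_neighborFinset, Finset.mem_filter]
    constructor
    · rintro ⟨h, hu⟩; exact ⟨hu, h.symm⟩
    · rintro ⟨hu, h⟩; exact ⟨h.symm, hu⟩
  calc ∑ u ∈ S, (H.neighborFinset u).card
      = ∑ u ∈ S, ∑ w ∈ T, if H.Adj u w then 1 else 0 :=
        Finset.sum_congr rfl fun u hu => by rw [h1 u hu, Finset.card_filter]
    _ = ∑ w ∈ T, ∑ u ∈ S, if H.Adj u w then 1 else 0 := Finset.sum_comm
    _ = ∑ w ∈ T, ((H.neighborFinset w) ∩ S).card :=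
        Finset.sum_congr rfl fun w _ => by rw [h2 w, Finset.card_filter]

theorem stmt_1 {V : Type*} [Fintype V] [DecidableEq V]
    (H : SimpleGraph V) [DecidableRel H.Adj]
    (U W : Finset V) (hdisj : Disjoint U W) (hcover : U ∪ W = Finset.univ)
    (hbip : ∀ x y, H.Adj x y → (x ∈ U ∧ y ∈ W) ∨ (x ∈ W ∧ y ∈ U))
    (g : ℕ) :
    (2 * g + 2 : ℕ∞) ≤ H.egirth ↔
      ∀ S : Finset V, S ⊆ U → S.card ≤ g →
        (∑ u ∈ S, (H.neighborFinset u).card) - (S.card - 1) ≤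
          (S.biUnion fun u => H.neighborFinset u).card := by
  classical
  have hUW : ∀ v : V, v ∈ U ↔ v ∉ W := by
    intro v
    constructor
    · exact fun hU hW => (Finset.disjoint_left.mp hdisj hU) hW
    · intro hW
      have hv : v ∈ U ∪ W := hcover ▸ Finset.mem_univ v
      rcases Finset.mem_union.mp hv with h | h
      · exact h
      · exact absurd h hW
  constructor
  · -- girth large ⇒ neighbourhood-union inequality
    intro hgirth S hSU hSg
    by_contra hlt
    push_neg at hlt
    set T := S.biUnion (fun u => H.neighborFinset u) with hT
    rcases Finset.eq_empty_or_nonempty S with rfl | hSne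
    · simp at hlt
    have hScard : 1 ≤ S.card := hSne.card_pos
    have hsum : T.card + S.card ≤ ∑ u ∈ S, (H.neighborFinset u).card := by omega
    have hSS : ∀ x y, x ∈ S → y ∈ S → ¬ H.Adj x y := by
      intro x y hx hy hadj
      rcases hbip x y hadj with ⟨h1, h2⟩ | ⟨h1, h2⟩
      · exact (hUW y).mp (hSU hy) h2
      · exact (hUW x).mp (hSU hx) h1
    set G' := incGraph H S with hG'
    have hE : G'.edgeFinset.card = ∑ u ∈ S, (H.neighborFinset u).card :=
      incGraph_card_edgeFinset H S hSS
    have hM : (Finset.univ.filter fun v => 0 < G'.degree v) ⊆ S ∪ T := by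
      intro v hv
      obtain ⟨w, hw⟩ :=
        (SimpleGraph.degree_pos_iff_exists_adj _ _).mp (Finset.mem_filter.mp hv).2
      rcases hw.2 with h | h
      · exact Finset.mem_union_left _ h
      · refine Finset.mem_union_right _ (Finset.mem_biUnion.mpr ⟨w, h, ?_⟩)
        exact (SimpleGraph.mem_neighborFinset _ _ _).mpr hw.1.symm
    have hSTcard : (S ∪ T).card ≤ S.card + T.card := Finset.card_union_le _ _
    have hpos : 0 < G'.edgeFinset.card := by omega
    have hnotacyclic : ¬ G'.IsAcyclic := by
      intro hac
      have h1 := acyclic_card_edge_lt G' hac hpos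
      have h2 := Finset.card_le_card hM
      omega
    rw [SimpleGraph.IsAcyclic] at hnotacyclic
    push_neg at hnotacyclic
    obtain ⟨v, c, hc⟩ := hnotacyclic
    have hPalt : ∀ {x y : V}, G'.Adj x y → ((x ∈ S) ↔ ¬ (y ∈ S)) := by
      rintro x y ⟨hadj, hor⟩
      constructor
      · exact fun hx hy => hSS x y hx hy hadj
      · intro hy
        rcases hor with h | h
        · exact h
        · exact absurd h hy
    have hcount := walk_alt_count (· ∈ S) hPalt c
    have hcnt : c.support.tail.countP (fun v => decide (v ∈ S))
        = (c.support.tail.filter (fun v => decide (v ∈ S))).length :=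
      List.countP_eq_length_filter
    have hLnodup : (c.support.tail.filter (fun v => decide (v ∈ S))).Nodup :=
      hc.support_nodup.filter _
    have hLsub : (c.support.tail.filter (fun v => decide (v ∈ S))).toFinset ⊆ S := by
      intro x hx
      have := List.mem_toFinset.mp hx
      have := List.of_mem_filter this
      simpa using this
    have hlenS : (c.support.tail.filter (fun v => decide (v ∈ S))).length ≤ S.card := by
      rw [← List.toFinset_card_of_nodup hLnodup]
      exact Finset.card_le_card hLsub
    have hclen : c.length ≤ 2 * g := by omega
    have hle : G' ≤ H := fun x y h => h.1
    have hcH : (c.mapLe hle).IsCycle := hc.mapLe hle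
    have hgle : H.egirth ≤ (c.mapLe hle).length :=
      SimpleGraph.le_egirth.mp le_rfl v _ hcH
    have hlm : (c.mapLe hle).length = c.length := by
      simp [SimpleGraph.Walk.mapLe]
    rw [hlm] at hgle
    have hfin : ((2 * g + 2 : ℕ) : ℕ∞) ≤ ((2 * g : ℕ) : ℕ∞) := by
      refine le_trans ?_ (le_trans hgle ?_)
      · exact_mod_cast hgirth
      · exact_mod_cast Nat.cast_le.mpr hclen
    have := Nat.cast_le.mp hfin
    omega
  · -- neighbourhood-union inequality ⇒ girth large
    intro hS
    refine SimpleGraph.le_egirth.mpr fun a c hc => ?_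
    by_contra hlen
    push_neg at hlen
    have hlenN : c.length ≤ 2 * g + 1 := by
      have h1 : ((c.length : ℕ) : ℕ∞) < ((2 * g + 2 : ℕ) : ℕ∞) := by exact_mod_cast hlen
      have := Nat.cast_lt.mp h1
      omega
    have hPU : ∀ {x y : V}, H.Adj x y → ((x ∈ U) ↔ ¬ (y ∈ U)) := by
      intro x y hadj
      rcases hbip x y hadj with ⟨hxU, hyW⟩ | ⟨hxW, hyU⟩
      · exact ⟨fun _ hyU => (hUW y).mp hyU hyW, fun _ => hxU⟩
      · constructor
        · intro hxU
          exact absurd hxW ((hUW x).mp hxU)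
        · intro hyU'
          exact absurd hyU hyU'
    have hcount := walk_alt_count (· ∈ U) hPU c
    set mU := c.support.tail.countP (fun v => decide (v ∈ U)) with hmU
    have hlC : c.length = 2 * mU := by omega
    have hm2 : 2 ≤ mU := by
      have := hc.three_le_length
      omega
    set S := (c.support.tail.filter (fun v => decide (v ∈ U))).toFinset with hSdef
    have hSnodup : (c.support.tail.filter (fun v => decide (v ∈ U))).Nodup :=
      hc.support_nodup.filter _
    have hScard : S.card = mU := by
      rw [hSdef, List.toFinset_card_of_nodup hSnodup, hmU, List.countP_eq_length_filter]
    have hSU : S ⊆ U := by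
      intro x hx
      have := List.of_mem_filter (List.mem_toFinset.mp hx)
      simpa using this
    have hmg : S.card ≤ g := by omega
    set T := S.biUnion (fun u => H.neighborFinset u) with hT
    have hineq := hS S hSU hmg
    rw [← hT] at hineq
    have hSS : ∀ x y, x ∈ S → y ∈ S → ¬ H.Adj x y := by
      intro x y hx hy hadj
      rcases hbip x y hadj with ⟨h1, h2⟩ | ⟨h1, h2⟩
      · exact (hUW y).mp (hSU hy) h2
      · exact (hUW x).mp (hSU hx) h1
    have hE : (incGraph H S).edgeFinset.card = ∑ u ∈ S, (H.neighborFinset u).card :=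
      incGraph_card_edgeFinset H S hSS
    -- `a` is in the tail of the support
    have ha_tail : a ∈ c.support.tail := by
      cases c with
      | nil => exact absurd hc SimpleGraph.Walk.IsCycle.not_of_nil
      | cons h q =>
        rw [SimpleGraph.Walk.support_cons, List.tail_cons]
        exact q.end_mem_support
    have hsupp_tail : ∀ x ∈ c.support, x ∈ c.support.tail := by
      intro x hx
      rw [c.support_eq_cons] at hx
      rcases List.mem_cons.mp hx with rfl | h
      · exact ha_tail
      · exact h
    have hsuppS : ∀ x ∈ c.support, x ∈ U → x ∈ S := by
      intro x hx hxU
      rw [hSdef]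
      refine List.mem_toFinset.mpr (List.mem_filter.mpr ⟨hsupp_tail x hx, by simpa using hxU⟩)
    have hTW : ∀ w ∈ T, w ∈ W := by
      intro w hw
      obtain ⟨u, hu, hw2⟩ := Finset.mem_biUnion.mp hw
      have hadj : H.Adj u w := (SimpleGraph.mem_neighborFinset _ _ _).mp hw2
      rcases hbip u w hadj with ⟨h1, h2⟩ | ⟨h1, h2⟩
      · exact h2
      · exact absurd h1 ((hUW u).mp (hSU hu))
    -- every support vertex in `W` is in `T`
    have hWT : ∀ w ∈ c.support, w ∈ W → w ∈ T := by
      intro w hw hwW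
      obtain ⟨i, hgv, hil⟩ := SimpleGraph.Walk.mem_support_iff_exists_getVert.mp hw
      have hlen0 : 0 < c.length := by omega
      obtain ⟨j, hj, hgj⟩ : ∃ j, j < c.length ∧ c.getVert j = w := by
        rcases Nat.lt_or_ge i c.length with h | h
        · exact ⟨i, h, hgv⟩
        · have : i = c.length := le_antisymm hil h
          refine ⟨0, hlen0, ?_⟩
          rw [SimpleGraph.Walk.getVert_zero, ← hgv, this, SimpleGraph.Walk.getVert_length]
      have hadj : H.Adj w (c.getVert (j + 1)) := by
        rw [← hgj]
        exact c.adj_getVert_succ hj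
      have hxsupp : c.getVert (j + 1) ∈ c.support :=
        SimpleGraph.Walk.mem_support_iff_exists_getVert.mpr ⟨j + 1, rfl, by omega⟩
      have hxU : c.getVert (j + 1) ∈ U := by
        rcases hbip w (c.getVert (j + 1)) hadj with ⟨h1, h2⟩ | ⟨h1, h2⟩
        · exact absurd hwW ((hUW w).mp h1)
        · exact h2
      refine Finset.mem_biUnion.mpr ⟨_, hsuppS _ hxsupp hxU, ?_⟩
      exact (SimpleGraph.mem_neighborFinset _ _ _).mpr hadj.symm
    -- the W-vertices of the cycle
    set W' := (c.support.tail.filter (fun v => decide (v ∈ W))).toFinset with hW'def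
    have hW'nodup : (c.support.tail.filter (fun v => decide (v ∈ W))).Nodup :=
      hc.support_nodup.filter _
    have hW'card : W'.card = mU := by
      rw [hW'def, List.toFinset_card_of_nodup hW'nodup, ← List.countP_eq_length_filter]
      have hcompl : c.support.tail.countP (fun v => decide (v ∈ W))
          = c.support.tail.countP (fun v => decide (¬ (decide (v ∈ U) = true))) := by
        apply List.countP_congr
        intro v hv
        by_cases h : v ∈ U
        · simp [h, (hUW v).mp h]
        · have hvW : v ∈ W := by
            by_contra hvW
            exact h ((hUW v).mpr hvW)
          simp [h, hvW]
      have hsum2 := List.length_eq_countP_add_countP (fun v => decide (v ∈ U))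
        (l := c.support.tail)
      have hlt : c.support.tail.length = c.length := by
        rw [List.length_tail, c.length_support]
        omega
      omega
    have hW'T : W' ⊆ T := by
      intro w hw
      have hmem := List.mem_toFinset.mp hw
      have h1 := List.of_mem_filter hmem
      have h2 := List.mem_of_mem_filter hmem
      refine hWT w ?_ (by simpa using h1)
      rw [c.support_eq_cons]
      exact List.mem_cons_of_mem _ h2
    -- the edges of the cycle
    set A := c.edges.toFinset with hA
    have hAcard : A.card = c.length := by
      rw [hA, List.toFinset_card_of_nodup hc.isCircuit.isTrail.edges_nodup,
        SimpleGraph.Walk.length_edges]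
    have hAsub : A ⊆ (incGraph H S).edgeFinset := by
      intro e
      induction e using Sym2.ind with
      | _ x y =>
        intro he
        have he' := List.mem_toFinset.mp he
        have hadj : H.Adj x y := c.edges_subset_edgeSet he'
        have hx := c.fst_mem_support_of_mem_edges he'
        have hy := c.snd_mem_support_of_mem_edges he'
        rw [SimpleGraph.mem_edgeFinset]
        rcases hbip x y hadj with ⟨h1, h2⟩ | ⟨h1, h2⟩
        · exact (SimpleGraph.mem_edgeSet _).mpr
            (incGraph_adj.mpr ⟨hadj, Or.inl (hsuppS x hx h1)⟩)
        · exact (SimpleGraph.mem_edgeSet _).mpr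
            (incGraph_adj.mpr ⟨hadj, Or.inr (hsuppS y hy h2)⟩)
    have hTex : ∀ w ∈ T, ∃ u, u ∈ S ∧ H.Adj u w := by
      intro w hw
      obtain ⟨u, hu, hw2⟩ := Finset.mem_biUnion.mp hw
      exact ⟨u, hu, (SimpleGraph.mem_neighborFinset _ _ _).mp hw2⟩
    set f : V → Sym2 V :=
      fun w => if h : ∃ u, u ∈ S ∧ H.Adj u w then s(w, h.choose) else s(w, w) with hf
    have hfval : ∀ w (h : ∃ u, u ∈ S ∧ H.Adj u w), f w = s(w, h.choose) := by
      intro w h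
      simp only [hf, dif_pos h]
    have hBsub : (T \ W').image f ⊆ (incGraph H S).edgeFinset := by
      intro e he
      obtain ⟨w, hwm, rfl⟩ := Finset.mem_image.mp he
      have hwT := (Finset.mem_sdiff.mp hwm).1
      have hex := hTex w hwT
      rw [hfval w hex, SimpleGraph.mem_edgeFinset]
      exact (SimpleGraph.mem_edgeSet _).mpr
        (incGraph_adj.mpr ⟨hex.choose_spec.2.symm, Or.inr hex.choose_spec.1⟩)
    have hdisjAB : Disjoint A ((T \ W').image f) := by
      rw [Finset.disjoint_left]
      intro e heA heB
      obtain ⟨w, hwm, hfe⟩ := Finset.mem_image.mp heB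
      obtain ⟨hwT, hwnW'⟩ := Finset.mem_sdiff.mp hwm
      have hex := hTex w hwT
      rw [hfval w hex] at hfe
      rw [← hfe] at heA
      have hmemE : s(w, hex.choose) ∈ c.edges := List.mem_toFinset.mp heA
      have hwsupp := c.fst_mem_support_of_mem_edges hmemE
      have hwW : w ∈ W := hTW w hwT
      refine hwnW' (List.mem_toFinset.mpr (List.mem_filter.mpr ⟨?_, by simpa using hwW⟩))
      exact hsupp_tail w hwsupp
    have hinj : Set.InjOn f (↑(T \ W') : Set V) := by
      intro w hw w' hw' hfe
      simp only [Finset.coe_sdiff, Set.mem_diff, Finset.mem_coe] at hw hw'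
      have hwT : w ∈ T := hw.1
      have hw'T : w' ∈ T := hw'.1
      have hex := hTex w hwT
      have hex' := hTex w' hw'T
      rw [hfval w hex, hfval w' hex'] at hfe
      rcases Sym2.eq_iff.mp hfe with ⟨h1, h2⟩ | ⟨h1, h2⟩
      · exact h1
      · exfalso
        have hwS : w ∈ S := h1 ▸ hex'.choose_spec.1
        exact (hUW w).mp (hSU hwS) (hTW w hwT)
    have hABsub : A ∪ (T \ W').image f ⊆ (incGraph H S).edgeFinset :=
      Finset.union_subset hAsub hBsub
    have hcards : (A ∪ (T \ W').image f).card = A.card + ((T \ W').image f).card :=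
      Finset.card_union_of_disjoint hdisjAB
    have himgcard : ((T \ W').image f).card = (T \ W').card :=
      Finset.card_image_of_injOn hinj
    have hsdcard : (T \ W').card = T.card - W'.card := Finset.card_sdiff_of_subset hW'T
    have hTcard_ge : mU ≤ T.card := hW'card ▸ Finset.card_le_card hW'T
    have hle2 : (A ∪ (T \ W').image f).card ≤ ∑ u ∈ S, (H.neighborFinset u).card :=
      hE ▸ Finset.card_le_card hABsub
    omega
end

section
/- Let r ≥ 1 and l with r ≤ l ≤ 2r−2. If G is a graph on n vertices with minimum degree δ(G) ≥ ⌊((r−1)/l)·n⌋ + l − r + 1, then every set A₀ ⊆ V(G) of size l percolates in the r-neighbour bootstrap process (i.e., iteratively infecting every vertex with at least r infected neighbours eventually infects all of V(G)). -/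
open Finset

lemma arith' (r l n d b : ℤ) (hr : 2 ≤ r) (hrl : r ≤ l) (hl : l ≤ 2*r - 2)
    (hd : (r-1)*n + 1 + l*(l-r) ≤ l*d)
    (hb1 : l ≤ b) (hb2 : b ≤ n - d + r - 2)
    (hE : b*(d-b+1) ≤ (r-1)*(n-b)) : False := by
  have hl0 : 1 ≤ l := by linarith
  have hdn : d ≤ n - l + r - 2 := by linarith
  have h1 : l * d ≤ l * (n - l + r - 2) := by nlinarith
  have hs : 1 ≤ l - r + 1 := by linarith
  have hn : 2*l + 1 ≤ n := by
    nlinarith [mul_le_mul_of_nonneg_left hdn (by linarith : (0:ℤ) ≤ l)]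
  have h2 : n + l - 2 ≤ 2 * d := by
    nlinarith [mul_nonneg (by linarith : (0:ℤ) ≤ 2*r - 2 - l)
      (by linarith : (0:ℤ) ≤ n - 2*l - 1)]
  have h3 : b ≤ d + r - l := by linarith
  nlinarith [mul_nonneg (by linarith : (0:ℤ) ≤ b - l)
    (by linarith : (0:ℤ) ≤ d + r - l - b)]

section aux
variable {V : Type*} [Fintype V] [DecidableEq V]

lemma subset_bootStep' (G : SimpleGraph V) [DecidableRel G.Adj] (r : ℕ) (A : Finset V) :
    A ⊆ bootStep G r A := subset_union_left

lemma iterate_fixed_of_subset' (f : Finset V → Finset V) (hf : ∀ s, s ⊆ f s) (A : Finset V) :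
    f (f^[Fintype.card V] A) = f^[Fintype.card V] A := by
  have key : ∀ t, f (f^[t] A) = f^[t] A ∨ t ≤ (f^[t] A).card := by
    intro t
    induction t with
    | zero => exact Or.inr (Nat.zero_le _)
    | succ t ih =>
      rcases ih with h | h
      · left; rw [Function.iterate_succ_apply', h, h]
      · by_cases h2 : f (f^[t] A) = f^[t] A
        · left; rw [Function.iterate_succ_apply', h2, h2]
        · right
          have hss : f^[t] A ⊂ f (f^[t] A) := (hf _).ssubset_of_ne (Ne.symm h2)
          have := Finset.card_lt_card hss
          rw [Function.iterate_succ_apply']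
          omega
  rcases key (Fintype.card V) with h | h
  · exact h
  · have hcard : (f^[Fintype.card V] A).card = Fintype.card V :=
      le_antisymm (Finset.card_le_univ _) h
    have huniv : f^[Fintype.card V] A = Finset.univ := Finset.eq_univ_of_card _ hcard
    rw [huniv]
    exact Subset.antisymm (Finset.subset_univ _) (hf _)

lemma subset_iterate' (f : Finset V → Finset V) (hf : ∀ s, s ⊆ f s) (A : Finset V) (t : ℕ) :
    A ⊆ f^[t] A := by
  induction t with
  | zero => exact subset_rfl
  | succ t ih => rw [Function.iterate_succ_apply']; exact ih.trans (hf _)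

lemma double_count' (G : SimpleGraph V) [DecidableRel G.Adj] (B : Finset V) :
    ∑ u ∈ B, ((G.neighborFinset u) ∩ Bᶜ).card = ∑ v ∈ Bᶜ, ((G.neighborFinset v) ∩ B).card := by
  have h1 : ∀ (S T : Finset V), ∑ u ∈ S, ((G.neighborFinset u) ∩ T).card
      = ∑ u ∈ S, ∑ v ∈ T, (if G.Adj u v then 1 else 0) := by
    intro S T
    refine Finset.sum_congr rfl fun u _ => ?_
    have h : (G.neighborFinset u) ∩ T = T.filter (fun v => G.Adj u v) := by
      ext v; simp [SimpleGraph.mem_neighborFinset, and_comm]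
    rw [h, Finset.card_filter]
  rw [h1, h1, Finset.sum_comm]
  exact Finset.sum_congr rfl fun v _ => Finset.sum_congr rfl fun u _ => by
    simp only [G.adj_comm u v]

lemma degree_split (G : SimpleGraph V) [DecidableRel G.Adj] (B : Finset V) (v : V) :
    ((G.neighborFinset v) ∩ B).card + ((G.neighborFinset v) ∩ Bᶜ).card = G.degree v := by
  rw [← SimpleGraph.card_neighborFinset_eq_degree]
  rw [Finset.inter_comm _ B, Finset.inter_comm _ Bᶜ]
  have : Bᶜ ∩ G.neighborFinset v = G.neighborFinset v \ B := by
    ext x; simp [and_comm, Finset.mem_sdiff]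
  rw [this, Finset.inter_comm, Finset.card_inter_add_card_sdiff]

end aux


theorem stmt_2 {V : Type*} [Fintype V] [DecidableEq V]
    (G : SimpleGraph V) [DecidableRel G.Adj] (r l : ℕ)
    (hr : 1 ≤ r) (hrl : r ≤ l) (hl : l ≤ 2 * r - 2)
    (hdeg : (r - 1) * Fintype.card V / l + (l - r) + 1 ≤ G.minDegree)
    (A₀ : Finset V) (hA : A₀.card = l) :
    percolates G r A₀ := by
  classical
  set n := Fintype.card V with hn
  set d := G.minDegree with hdmin
  set B := (bootStep G r)^[n] A₀ with hB
  by_cases hBuniv : B = Finset.univ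
  · exact ⟨n, hBuniv⟩
  exfalso
  have hr2 : 2 ≤ r := by omega
  have hfix : bootStep G r B = B := iterate_fixed_of_subset' _ (subset_bootStep' G r) A₀
  have hA₀B : A₀ ⊆ B := subset_iterate' _ (subset_bootStep' G r) A₀ n
  have hbl : l ≤ B.card := hA ▸ Finset.card_le_card hA₀B
  have hclosed : ∀ v ∉ B, ((G.neighborFinset v) ∩ B).card < r := by
    intro v hv
    by_contra hc
    push_neg at hc
    exact hv (hfix ▸ Finset.mem_union_right _ (Finset.mem_filter.2 ⟨Finset.mem_univ v, hc⟩))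
  obtain ⟨v₀, hv₀⟩ : ∃ v, v ∉ B := by
    by_contra h; push_neg at h; exact hBuniv (Finset.eq_univ_of_forall h)
  have hv₀c : v₀ ∈ Bᶜ := Finset.mem_compl.2 hv₀
  have hdle : ∀ v : V, d ≤ G.degree v := fun v => G.minDegree_le_degree v
  -- per-vertex bound for u ∈ B
  have hperu : ∀ u ∈ B, d + 1 ≤ ((G.neighborFinset u) ∩ Bᶜ).card + B.card := by
    intro u hu
    have h1 : (G.neighborFinset u) ∩ B ⊆ B.erase u := by
      intro x hx
      rw [Finset.mem_inter] at hx
      refine Finset.mem_erase.2 ⟨?_, hx.2⟩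
      exact fun hxu => G.ne_of_adj ((SimpleGraph.mem_neighborFinset _ _ _).1 hx.1).symm
        (by rw [hxu])
    have h2 := Finset.card_le_card h1
    rw [Finset.card_erase_of_mem hu] at h2
    have h3 := degree_split G B u
    have h4 := hdle u
    have h5 : 1 ≤ B.card := Finset.card_pos.2 ⟨u, hu⟩
    omega
  -- sum over B
  set E := ∑ u ∈ B, ((G.neighborFinset u) ∩ Bᶜ).card with hE
  have hsum1 : B.card * (d + 1) ≤ E + B.card * B.card := by
    calc B.card * (d + 1) = ∑ _u ∈ B, (d + 1) := by rw [Finset.sum_const, smul_eq_mul]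
    _ ≤ ∑ u ∈ B, (((G.neighborFinset u) ∩ Bᶜ).card + B.card) :=
        Finset.sum_le_sum hperu
    _ = E + B.card * B.card := by
        rw [Finset.sum_add_distrib, Finset.sum_const, smul_eq_mul]
  -- upper bound on E
  have hsum2 : E + Bᶜ.card ≤ Bᶜ.card * r := by
    rw [hE, double_count' G B]
    calc ∑ v ∈ Bᶜ, ((G.neighborFinset v) ∩ B).card + Bᶜ.card
        = ∑ v ∈ Bᶜ, (((G.neighborFinset v) ∩ B).card + 1) := by
          rw [Finset.sum_add_distrib, Finset.sum_const, smul_eq_mul, mul_one]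
    _ ≤ ∑ _v ∈ Bᶜ, r := Finset.sum_le_sum fun v hv =>
          hclosed v (Finset.mem_compl.1 hv)
    _ = Bᶜ.card * r := by rw [Finset.sum_const, smul_eq_mul]
  -- bound from v₀
  have hv₀bd : d + 2 ≤ r + Bᶜ.card := by
    have h1 : ((G.neighborFinset v₀) ∩ B).card < r := hclosed v₀ hv₀
    have h2 : (G.neighborFinset v₀) ∩ Bᶜ ⊆ Bᶜ.erase v₀ := by
      intro x hx
      rw [Finset.mem_inter] at hx
      refine Finset.mem_erase.2 ⟨?_, hx.2⟩
      exact fun hxu => G.ne_of_adj ((SimpleGraph.mem_neighborFinset _ _ _).1 hx.1).symm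
        (by rw [hxu])
    have h3 := Finset.card_le_card h2
    rw [Finset.card_erase_of_mem hv₀c] at h3
    have h4 := degree_split G B v₀
    have h5 := hdle v₀
    have h6 : 1 ≤ Bᶜ.card := Finset.card_pos.2 ⟨v₀, hv₀c⟩
    omega
  have hcompl : B.card + Bᶜ.card = n := by
    rw [hn]; exact Finset.card_add_card_compl B
  -- min degree hypothesis, multiplied by l
  obtain ⟨q, m', hqm, hm, hdq⟩ : ∃ q m', l*q + m' = (r-1)*n ∧ m' < l ∧ q + (l-r) + 1 ≤ d :=
    ⟨(r-1)*n/l, (r-1)*n % l, Nat.div_add_mod _ _, Nat.mod_lt _ (by omega), hdeg⟩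
  have hld : l * (q + (l-r) + 1) ≤ l * d := Nat.mul_le_mul_left l hdq
  -- now cast to ℤ and conclude
  refine arith' r l n d B.card (by exact_mod_cast hr2) (by exact_mod_cast hrl)
    (by push_cast; omega) ?_ (by exact_mod_cast hbl) ?_ ?_
  · have e1 : (l:ℤ) * ((q:ℤ) + ((l:ℤ) - r) + 1) ≤ l * d := by
      have := hld
      zify [hrl] at this
      linarith
    have e2 : (l:ℤ) * q + m' = ((r:ℤ)-1)*n := by
      have := hqm
      zify [hr] at this
      linarith
    have e3 : (m' : ℤ) < l := by exact_mod_cast hm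
    nlinarith
  · have h1 : (B.card : ℤ) + Bᶜ.card = n := by exact_mod_cast hcompl
    have h2 : (d:ℤ) + 2 ≤ r + Bᶜ.card := by exact_mod_cast hv₀bd
    linarith
  · have h1 : (B.card : ℤ) * (d + 1) ≤ E + B.card * B.card := by exact_mod_cast hsum1
    have h2 : (E:ℤ) + Bᶜ.card ≤ Bᶜ.card * r := by exact_mod_cast hsum2
    have h3 : (B.card : ℤ) + Bᶜ.card = n := by exact_mod_cast hcompl
    nlinarith
end

section
/- Let r ≥ 1 and l with r ≤ l ≤ 2r−2, and let n ≥ 2l. There exists a graph G on n vertices with minimum degree δ(G) = ⌊((r−1)/l)·n + l − r⌋ containing a set A₀ of size l that does not percolate in the r-neighbour bootstrap process. Concretely, G consists of a clique U on l vertices and a clique W on n−l vertices, where every vertex of W has exactly r−1 neighbours in U, every vertex of U has ⌊((r−1)/l)n − (r−1)⌋ or ⌈((r−1)/l)n − (r−1)⌉ neighbours in W, and A₀ = U is closed under the bootstrap process. -/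
open Finset

/-- Auxiliary: pattern predicate for cross edges. -/
def bpP (k l i j : ℕ) : Prop := (i + j * (l - k)) % l < k

instance bpP.dec (k l i j : ℕ) : Decidable (bpP k l i j) := Nat.decLt _ _

lemma bp_count_mod (l N i : ℕ) (hl : 0 < l) (hi : i < l) :
    ((range N).filter (fun t => t % l = i)).card = (N + l - 1 - i) / l := by
  have himg : (range N).filter (fun t => t % l = i)
      = (range ((N + l - 1 - i) / l)).image (fun q => i + l * q) := by
    ext t
    simp only [mem_filter, mem_range, mem_image]
    constructor
    · rintro ⟨htN, hmod⟩
      have h2 : i + l * (t / l) = t := by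
        conv_rhs => rw [← Nat.mod_add_div t l, hmod]
      refine ⟨t / l, ?_, h2⟩
      have h1 : (t / l + 1) * l = l * (t / l) + l := by ring
      have h3 : (t / l + 1) * l ≤ N + l - 1 - i := by omega
      have h4 := (Nat.le_div_iff_mul_le hl).mpr h3
      omega
    · rintro ⟨q, hq, rfl⟩
      have h1 : (q + 1) * l ≤ ((N + l - 1 - i) / l) * l :=
        Nat.mul_le_mul_right l (by omega)
      have h2 : ((N + l - 1 - i) / l) * l ≤ N + l - 1 - i := Nat.div_mul_le_self _ _
      have h3 : (q + 1) * l = l * q + l := by ring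
      constructor
      · omega
      · simp [Nat.add_mul_mod_self_left, Nat.mod_eq_of_lt hi]
  rw [himg, Finset.card_image_of_injective _ (fun a b h => Nat.eq_of_mul_eq_mul_left hl (by omega)), card_range]

lemma bp_ceil_le (l N : ℕ) (hl : 0 < l) : (N + l - 1) / l ≤ N / l + 1 := by
  rcases Nat.eq_zero_or_pos N with h | h
  · subst h; simp [Nat.div_eq_of_lt (by omega : l - 1 < l)]
  · have h2 : N + l - 1 = (N - 1) + l := by omega
    rw [h2, Nat.add_div_right _ hl]
    exact Nat.add_le_add_right (Nat.div_le_div_right (by omega)) 1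

/-- each `w ∈ W` has exactly `k` neighbours in `U`. -/
lemma bp_count_w (l k c : ℕ) (hl : 0 < l) (hk : k ≤ l) :
    ((range l).filter (fun i => (i + c) % l < k)).card = k := by
  have key : ∀ a, (a + (l - c % l) + c) % l = a % l := by
    intro a
    have h1 : c % l < l := Nat.mod_lt _ hl
    have h2 := Nat.div_add_mod c l
    have h3 : a + (l - c % l) + c = a + l * (1 + c / l) := by
      have h4 : l * (1 + c / l) = l + l * (c / l) := by ring
      omega
    rw [h3, Nat.add_mul_mod_self_left]
  have hcard : ((range l).filter (fun i => (i + c) % l < k)).card = (range k).card := by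
    apply Finset.card_bij' (fun i _ => (i + c) % l) (fun s _ => (s + (l - c % l)) % l)
    · intro a ha
      simp only [mem_filter] at ha
      exact mem_range.2 ha.2
    · intro s hs
      simp only [mem_range] at hs
      simp only [mem_filter, mem_range]
      refine ⟨Nat.mod_lt _ hl, ?_⟩
      rw [Nat.mod_add_mod, key, Nat.mod_eq_of_lt (by omega)]
      omega
    · intro a ha
      simp only [mem_filter, mem_range] at ha
      rw [Nat.mod_add_mod, Nat.add_right_comm, key, Nat.mod_eq_of_lt ha.1]
    · intro s hs
      simp only [mem_range] at hs
      rw [Nat.mod_add_mod, key, Nat.mod_eq_of_lt (by omega)]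
  rw [hcard, card_range]

/-- count of `j < m` hit by pattern equals count of residues in a range. -/
lemma bp_count_u (l k m i : ℕ) (hl : 0 < l) (hk : k ≤ l) (hi : i < l) :
    ((range m).filter (fun j => bpP k l i j)).card
      = ((range (k * m)).filter (fun t => t % l = i)).card := by
  apply Finset.card_bij (fun j _ => j * k + (i + j * (l - k)) % l)
  · intro j hj
    simp only [Finset.mem_filter, Finset.mem_range] at hj ⊢; simp only [bpP] at hj
    obtain ⟨hjm, hs⟩ := hj
    have hkl : j * k + j * (l - k) = j * l := by
      rw [← Nat.mul_add]; congr 1; omega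
    constructor
    · have h1 : (j + 1) * k ≤ m * k := Nat.mul_le_mul_right k (by omega)
      have h2 : (j + 1) * k = j * k + k := by ring
      have h3 : m * k = k * m := Nat.mul_comm _ _
      omega
    · rw [Nat.add_mod_mod, show j * k + (i + j * (l - k)) = i + j * l by omega,
        Nat.add_mul_mod_self_right, Nat.mod_eq_of_lt hi]
  · intro j1 h1 j2 h2 heq
    simp only [Finset.mem_filter, Finset.mem_range] at h1 h2; simp only [bpP] at h1 h2
    have hk0 : 0 < k := by omega
    have e1 : (j1 * k + (i + j1 * (l - k)) % l) / k = j1 := by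
      rw [Nat.mul_comm j1 k, Nat.mul_add_div hk0, Nat.div_eq_of_lt h1.2]
      omega
    have e2 : (j2 * k + (i + j2 * (l - k)) % l) / k = j2 := by
      rw [Nat.mul_comm j2 k, Nat.mul_add_div hk0, Nat.div_eq_of_lt h2.2]
      omega
    rw [← e1, ← e2, heq]
  · intro t ht
    simp only [mem_filter, mem_range] at ht
    obtain ⟨htN, hmod⟩ := ht
    have hk0 : 0 < k := by
      rcases Nat.eq_zero_or_pos k with h | h
      · subst h; simp at htN
      · exact h
    have hdm := Nat.div_add_mod t k
    have hcc : k * (t / k) = (t / k) * k := Nat.mul_comm _ _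
    have hmk : t % k < k := Nat.mod_lt _ hk0
    have hkl : (t / k) * k + (t / k) * (l - k) = (t / k) * l := by
      rw [← Nat.mul_add]; congr 1; omega
    have hs : (i + t / k * (l - k)) % l = t % k := by
      rw [← hmod, Nat.mod_add_mod,
        show t + t / k * (l - k) = t % k + (t / k) * l by omega,
        Nat.add_mul_mod_self_right, Nat.mod_eq_of_lt (lt_of_lt_of_le hmk hk)]
    have hjm : t / k < m := Nat.lt_of_mul_lt_mul_left (a := k) (by omega)
    refine ⟨t / k, ?_, ?_⟩
    · simp only [Finset.mem_filter, Finset.mem_range]; simp only [bpP]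
      exact ⟨hjm, by rw [hs]; exact hmk⟩
    · rw [hs]; omega

def bpAdj (k l x y : ℕ) : Prop :=
  (x < l ∧ y < l) ∨ (l ≤ x ∧ l ≤ y) ∨ (x < l ∧ l ≤ y ∧ bpP k l x (y - l)) ∨
    (y < l ∧ l ≤ x ∧ bpP k l y (x - l))

instance bpAdj.dec (k l x y : ℕ) : Decidable (bpAdj k l x y) := by
  unfold bpAdj; infer_instance

def bpGraph (k l n : ℕ) : SimpleGraph (Fin n) where
  Adj x y := x ≠ y ∧ bpAdj k l (x : ℕ) (y : ℕ)
  symm := by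
    constructor
    rintro x y ⟨h1, h2⟩
    refine ⟨Ne.symm h1, ?_⟩
    unfold bpAdj at *
    tauto
  loopless := ⟨fun x h => h.1 rfl⟩

instance bpGraph.decAdj (k l n : ℕ) : DecidableRel (bpGraph k l n).Adj :=
  fun _ _ => inferInstanceAs (Decidable (_ ∧ _))

lemma bpGraph_adj {k l n : ℕ} {x y : Fin n} :
    (bpGraph k l n).Adj x y ↔ x ≠ y ∧ bpAdj k l (x : ℕ) (y : ℕ) := Iff.rfl

lemma card_filter_lt (n l : ℕ) (hln : l ≤ n) (p : ℕ → Prop) [DecidablePred p] :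
    ((univ : Finset (Fin n)).filter (fun x : Fin n => x.val < l ∧ p x.val)).card
      = ((range l).filter p).card := by
  apply Finset.card_bij (fun (x : Fin n) _ => x.val)
  · intro x hx
    simp only [mem_filter, mem_univ, true_and] at hx
    exact mem_filter.2 ⟨mem_range.2 hx.1, hx.2⟩
  · intro a _ b _ h; exact Fin.ext h
  · intro b hb
    simp only [mem_filter, mem_range] at hb
    exact ⟨⟨b, lt_of_lt_of_le hb.1 hln⟩, by simp [hb.1, hb.2], rfl⟩

lemma card_filter_ge (n l : ℕ) (p : ℕ → Prop) [DecidablePred p] :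
    ((univ : Finset (Fin n)).filter (fun x : Fin n => l ≤ x.val ∧ p (x.val - l))).card
      = ((range (n - l)).filter p).card := by
  apply Finset.card_bij (fun (x : Fin n) _ => x.val - l)
  · intro x hx
    simp only [mem_filter, mem_univ, true_and] at hx
    exact mem_filter.2 ⟨mem_range.2 (by have := x.isLt; omega), hx.2⟩
  · intro a ha b hb h
    simp only [mem_filter, mem_univ, true_and] at ha hb
    exact Fin.ext (by omega)
  · intro b hb
    simp only [mem_filter, mem_range] at hb
    refine ⟨⟨b + l, by omega⟩, by simpa using hb.2, by simp⟩

lemma card_val_lt (n l : ℕ) (hln : l ≤ n) :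
    ((univ : Finset (Fin n)).filter (fun x : Fin n => x.val < l)).card = l := by
  have h : ((univ : Finset (Fin n)).filter (fun x : Fin n => x.val < l)).card
      = (range l).card := ?_
  · rw [h, card_range]
  apply Finset.card_bij (fun (x : Fin n) _ => x.val)
  · intro x hx
    simp only [mem_filter, mem_univ, true_and] at hx
    exact mem_range.2 hx
  · intro a _ b _ h; exact Fin.ext h
  · intro b hb
    simp only [mem_range] at hb
    exact ⟨⟨b, lt_of_lt_of_le hb hln⟩, by simp [hb], rfl⟩

lemma card_val_ge (n l : ℕ) :
    ((univ : Finset (Fin n)).filter (fun x : Fin n => l ≤ x.val)).card = n - l := by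
  have h : ((univ : Finset (Fin n)).filter (fun x : Fin n => l ≤ x.val)).card
      = (range (n - l)).card := ?_
  · rw [h, card_range]
  apply Finset.card_bij (fun (x : Fin n) _ => x.val - l)
  · intro x hx
    simp only [mem_filter, mem_univ, true_and] at hx
    exact mem_range.2 (by have := x.isLt; omega)
  · intro a ha b hb h
    simp only [mem_filter, mem_univ, true_and] at ha hb
    exact Fin.ext (by omega)
  · intro b hb
    simp only [mem_range] at hb
    refine ⟨⟨b + l, by omega⟩, by simp, by simp⟩


theorem stmt_3 (r l n : ℕ) (hr : 1 ≤ r) (hrl : r ≤ l) (hl : l ≤ 2 * r - 2)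
    (hn : 2 * l ≤ n) :
    ∃ (G : SimpleGraph (Fin n)) (_ : DecidableRel G.Adj),
      G.minDegree = (r - 1) * n / l + (l - r) ∧
      ∃ U W : Finset (Fin n),
        Disjoint U W ∧ U ∪ W = Finset.univ ∧ U.card = l ∧
        (∀ x ∈ U, ∀ y ∈ U, x ≠ y → G.Adj x y) ∧
        (∀ x ∈ W, ∀ y ∈ W, x ≠ y → G.Adj x y) ∧
        (∀ w ∈ W, ((G.neighborFinset w) ∩ U).card = r - 1) ∧
        (∀ u ∈ U, ((G.neighborFinset u) ∩ W).card = (r - 1) * n / l - (r - 1) ∨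
          ((G.neighborFinset u) ∩ W).card = ((r - 1) * n + l - 1) / l - (r - 1)) ∧
        bootStep G r U = U ∧ ¬ percolates G r U := by
  have hr2 : 2 ≤ r := by omega
  have hl0 : 0 < l := by omega
  have hln : l < n := by omega
  have hml : l ≤ n - l := by omega
  set k := r - 1 with hkdef
  have hkl : k < l := by omega
  set G := bpGraph k l n with hG
  set U := (univ : Finset (Fin n)).filter (fun x : Fin n => x.val < l) with hU
  set W := (univ : Finset (Fin n)).filter (fun x : Fin n => l ≤ x.val) with hW
  have hmemU : ∀ x : Fin n, x ∈ U ↔ x.val < l := by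
    intro x; rw [hU, mem_filter]; simp
  have hmemW : ∀ x : Fin n, x ∈ W ↔ l ≤ x.val := by
    intro x; rw [hW, mem_filter]; simp
  have hdisj : Disjoint U W := by
    rw [Finset.disjoint_left]
    intro a ha hb
    rw [hmemU] at ha; rw [hmemW] at hb; omega
  have hunion : U ∪ W = univ := by
    ext x
    simp only [mem_union, hmemU x, hmemW x, mem_univ, iff_true]
    omega
  have hcardU : U.card = l := card_val_lt n l hln.le
  have hcardW : W.card = n - l := card_val_ge n l
  have hnbU : ∀ u : Fin n, u.val < l → G.neighborFinset u ∩ U = U.erase u := by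
    intro u hu
    ext x
    simp only [mem_inter, SimpleGraph.mem_neighborFinset, hG, bpGraph_adj, mem_erase,
      hmemU x]
    constructor
    · rintro ⟨⟨hne, _⟩, hx⟩
      exact ⟨Ne.symm hne, hx⟩
    · rintro ⟨hne, hx⟩
      exact ⟨⟨Ne.symm hne, Or.inl ⟨hu, hx⟩⟩, hx⟩
  have hnbUW : ∀ u : Fin n, u.val < l →
      G.neighborFinset u ∩ W
        = univ.filter (fun x : Fin n => l ≤ x.val ∧ bpP k l u.val (x.val - l)) := by
    intro u hu
    ext x
    simp only [mem_inter, SimpleGraph.mem_neighborFinset, hG, bpGraph_adj, mem_filter,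
      mem_univ, true_and, hmemW x]
    constructor
    · rintro ⟨⟨hne, hadj⟩, hx⟩
      refine ⟨hx, ?_⟩
      rcases hadj with ⟨_, h⟩ | ⟨h, _⟩ | ⟨_, _, h⟩ | ⟨h, _, _⟩
      · omega
      · omega
      · exact h
      · omega
    · rintro ⟨hx, hp⟩
      exact ⟨⟨Fin.ne_of_val_ne (by omega), Or.inr (Or.inr (Or.inl ⟨hu, hx, hp⟩))⟩, hx⟩
  have hnbW : ∀ w : Fin n, l ≤ w.val → G.neighborFinset w ∩ W = W.erase w := by
    intro w hw
    ext x
    simp only [mem_inter, SimpleGraph.mem_neighborFinset, hG, bpGraph_adj, mem_erase,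
      hmemW x]
    constructor
    · rintro ⟨⟨hne, _⟩, hx⟩
      exact ⟨Ne.symm hne, hx⟩
    · rintro ⟨hne, hx⟩
      exact ⟨⟨Ne.symm hne, Or.inr (Or.inl ⟨hw, hx⟩)⟩, hx⟩
  have hnbWU : ∀ w : Fin n, l ≤ w.val →
      G.neighborFinset w ∩ U
        = univ.filter (fun x : Fin n => x.val < l ∧ bpP k l x.val (w.val - l)) := by
    intro w hw
    ext x
    simp only [mem_inter, SimpleGraph.mem_neighborFinset, hG, bpGraph_adj, mem_filter,
      mem_univ, true_and, hmemU x]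
    constructor
    · rintro ⟨⟨hne, hadj⟩, hx⟩
      refine ⟨hx, ?_⟩
      rcases hadj with ⟨h, _⟩ | ⟨_, h⟩ | ⟨h, _, _⟩ | ⟨_, _, h⟩
      · omega
      · omega
      · omega
      · exact h
    · rintro ⟨hx, hp⟩
      exact ⟨⟨Fin.ne_of_val_ne (by omega), Or.inr (Or.inr (Or.inr ⟨hx, hw, hp⟩))⟩, hx⟩
  have hcW : ∀ u : Fin n, u.val < l →
      (G.neighborFinset u ∩ W).card = (k * (n - l) + l - 1 - u.val) / l := by
    intro u hu
    rw [hnbUW u hu, card_filter_ge n l (bpP k l u.val),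
      bp_count_u l k (n - l) u.val hl0 hkl.le hu,
      bp_count_mod l (k * (n - l)) u.val hl0 hu]
  have hcU : ∀ w : Fin n, l ≤ w.val → (G.neighborFinset w ∩ U).card = k := by
    intro w hw
    rw [hnbWU w hw, card_filter_lt n l hln.le (fun i => bpP k l i (w.val - l))]
    simp only [bpP]
    exact bp_count_w l k ((w.val - l) * (l - k)) hl0 hkl.le
  have hsplit : ∀ v : Fin n,
      G.degree v = (G.neighborFinset v ∩ U).card + (G.neighborFinset v ∩ W).card := by
    intro v
    show (G.neighborFinset v).card = _
    rw [← Finset.card_union_of_disjoint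
        (hdisj.mono inter_subset_right inter_subset_right),
      ← Finset.inter_union_distrib_left, hunion, Finset.inter_univ]
  have hdegU : ∀ u : Fin n, u.val < l →
      G.degree u = (l - 1) + (k * (n - l) + l - 1 - u.val) / l := by
    intro u hu
    rw [hsplit u, hnbU u hu, hcW u hu, card_erase_of_mem ((hmemU u).2 hu), hcardU]
  have hdegW : ∀ w : Fin n, l ≤ w.val → G.degree w = k + (n - l - 1) := by
    intro w hw
    rw [hsplit w, hnbW w hw, hcU w hw, card_erase_of_mem ((hmemW w).2 hw), hcardW]
  have hNl : k * n / l = k * (n - l) / l + k := by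
    have e : k * n = k * (n - l) + k * l := by
      rw [← Nat.mul_add]; congr 1; omega
    rw [e, Nat.add_mul_div_right _ _ hl0]
  have hNc : (k * n + l - 1) / l = (k * (n - l) + l - 1) / l + k := by
    have e0 : k * n = k * (n - l) + k * l := by
      rw [← Nat.mul_add]; congr 1; omega
    have e : k * n + l - 1 = (k * (n - l) + l - 1) + k * l := by omega
    rw [e, Nat.add_mul_div_right _ _ hl0]
  have hfloor : k * n / l - k = k * (n - l) / l := by
    rw [hNl, Nat.add_sub_cancel]
  have hceilv : (k * n + l - 1) / l - k = (k * (n - l) + l - 1) / l := by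
    rw [hNc, Nat.add_sub_cancel]
  have hceil : (k * (n - l) + l - 1) / l ≤ k * (n - l) / l + 1 :=
    bp_ceil_le l (k * (n - l)) hl0
  have hWged : k * (n - l) / l ≤ (n - l) - l + k := by
    have e1 : k * (n - l) = k * ((n - l) - l) + k * l := by
      rw [← Nat.mul_add]; congr 1; omega
    have e2 : ((n - l) - l + k) * l = ((n - l) - l) * l + k * l := by ring
    have e3 : k * ((n - l) - l) ≤ ((n - l) - l) * l := by
      rw [Nat.mul_comm]; exact Nat.mul_le_mul_left _ hkl.le
    have h5 : k * (n - l) ≤ ((n - l) - l + k) * l := by omega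
    calc k * (n - l) / l ≤ (((n - l) - l + k) * l) / l := Nat.div_le_div_right h5
      _ = (n - l) - l + k := Nat.mul_div_cancel _ hl0
  haveI : Nonempty (Fin n) := ⟨⟨0, by omega⟩⟩
  have hmin : G.minDegree = (l - 1) + k * (n - l) / l := by
    apply le_antisymm
    · obtain ⟨u0, hu0⟩ : ∃ u0 : Fin n, u0.val = l - 1 := ⟨⟨l - 1, by omega⟩, rfl⟩
      have h := SimpleGraph.minDegree_le_degree G u0
      rw [hdegU u0 (by omega)] at h
      rw [hu0] at h
      rw [show k * (n - l) + l - 1 - (l - 1) = k * (n - l) by omega] at h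
      exact h
    · apply SimpleGraph.le_minDegree_of_forall_le_degree
      intro v
      rcases lt_or_ge v.val l with hv | hv
      · rw [hdegU v hv]
        exact Nat.add_le_add_left (Nat.div_le_div_right (by omega)) _
      · rw [hdegW v hv]
        have h1 : (l - 1) + k * (n - l) / l ≤ (l - 1) + ((n - l) - l + k) :=
          Nat.add_le_add_left hWged _
        revert h1
        generalize k * (n - l) / l = A
        intro h1
        omega
  have hboot : bootStep G r U = U := by
    unfold bootStep
    rw [Finset.union_eq_left]
    intro v hv
    simp only [mem_filter, mem_univ, true_and] at hv
    rcases lt_or_ge v.val l with h | h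
    · exact (hmemU v).2 h
    · rw [hcU v h] at hv
      omega
  have hperc : ¬ percolates G r U := by
    intro hp
    unfold percolates at hp
    obtain ⟨t, ht⟩ := hp
    rw [Function.iterate_fixed hboot] at ht
    have hw : (⟨l, hln⟩ : Fin n) ∈ U := ht ▸ mem_univ _
    rw [hmemU] at hw
    exact absurd hw (lt_irrefl l)
  refine ⟨G, bpGraph.decAdj k l n, ?_, U, W, hdisj, hunion, hcardU, ?_, ?_, ?_, ?_,
    hboot, hperc⟩
  · rw [hmin, hNl]
    generalize k * (n - l) / l = A
    omega
  · intro x hx y hy hxy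
    rw [hmemU] at hx hy
    refine bpGraph_adj.mpr ⟨hxy, ?_⟩
    unfold bpAdj
    exact Or.inl ⟨hx, hy⟩
  · intro x hx y hy hxy
    rw [hmemW] at hx hy
    refine bpGraph_adj.mpr ⟨hxy, ?_⟩
    unfold bpAdj
    exact Or.inr (Or.inl ⟨hx, hy⟩)
  · intro w hw
    rw [hmemW] at hw
    exact hcU w hw
  · intro u hu
    rw [hmemU] at hu
    rw [hcW u hu, hfloor, hceilv]
    have h1 : k * (n - l) / l ≤ (k * (n - l) + l - 1 - u.val) / l :=
      Nat.div_le_div_right (by omega)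
    have h2 : (k * (n - l) + l - 1 - u.val) / l ≤ (k * (n - l) + l - 1) / l :=
      Nat.div_le_div_right (by omega)
    have h3 := hceil
    revert h1 h2 h3
    generalize (k * (n - l) + l - 1 - u.val) / l = B
    generalize (k * (n - l) + l - 1) / l = C
    generalize k * (n - l) / l = A
    intro h1 h2 h3
    omega
end

section
/- If G is a graph whose vertex set is partitioned into ⌊l/r⌋ + 1 pairwise disjoint cliques with no edges between them, then G has no percolating set of size l for the r-neighbour bootstrap process (assuming each clique has at least r vertices). Consequently, for n large, δ₀(n, r, l) ≥ ⌊n/(⌊l/r⌋+1)⌋. -/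
open Finset

/-- `δ₀(n, r, l)`: least `D` such that every `n`-vertex graph with minimum degree
at least `D` has a percolating set of size `l`. -/
noncomputable def delta0 (n r l : ℕ) : ℕ :=
  sInf {D : ℕ | ∀ (G : SimpleGraph (Fin n)) (_ : DecidableRel G.Adj),
    D ≤ G.minDegree → ∃ A₀ : Finset (Fin n), A₀.card = l ∧ percolates G r A₀}

lemma part1_aux {V : Type} [Fintype V] [DecidableEq V] (G : SimpleGraph V)
    [DecidableRel G.Adj] (r l : ℕ) (hr : 1 ≤ r) (P : Fin (l / r + 1) → Finset V)
    (hPcard : ∀ i, r ≤ (P i).card)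
    (hdisj : ∀ i j, i ≠ j → Disjoint (P i) (P j))
    (hedges : ∀ x y, G.Adj x y → ∃ i, x ∈ P i ∧ y ∈ P i)
    (A₀ : Finset V) (hA₀ : A₀.card = l) : ¬ percolates G r A₀ := by
  rintro ⟨t, ht⟩
  have hpig : ∃ i, ((A₀ ∩ P i).card < r) := by
    by_contra h
    push_neg at h
    have hsum : ∑ i, (A₀ ∩ P i).card ≤ A₀.card := by
      rw [← Finset.card_biUnion (fun i _ j _ hij =>
        Finset.disjoint_of_subset_left Finset.inter_subset_right
          (Finset.disjoint_of_subset_right Finset.inter_subset_right (hdisj i j hij)))]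
      exact Finset.card_le_card (Finset.biUnion_subset.2 fun i _ => Finset.inter_subset_left)
    have hge : (l / r + 1) * r ≤ ∑ i, (A₀ ∩ P i).card := by
      calc (l / r + 1) * r = ∑ _i : Fin (l / r + 1), r := by
            simp [Finset.sum_const, Finset.card_univ, Nat.mul_comm]
        _ ≤ _ := Finset.sum_le_sum fun i _ => h i
    have h1 : r * (l / r) + l % r = l := Nat.div_add_mod l r
    have h2 : l % r < r := Nat.mod_lt _ hr
    have h3 : (l / r + 1) * r = r * (l / r) + r := by ring
    rw [hA₀] at hsum
    linarith
  obtain ⟨i, hi⟩ := hpig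
  have key : ∀ s, ((bootStep G r)^[s] A₀) ∩ P i = A₀ ∩ P i := by
    intro s
    induction s with
    | zero => rfl
    | succ s ih =>
      rw [Function.iterate_succ_apply']
      set A := (bootStep G r)^[s] A₀ with hA
      unfold bootStep
      rw [Finset.union_inter_distrib_right, ih]
      have hempty : (Finset.univ.filter fun v => r ≤ ((G.neighborFinset v) ∩ A).card) ∩ P i = ∅ := by
        rw [Finset.eq_empty_iff_forall_notMem]
        intro v hv
        rw [Finset.mem_inter, Finset.mem_filter] at hv
        obtain ⟨⟨-, hvr⟩, hvP⟩ := hv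
        have hsub : G.neighborFinset v ∩ A ⊆ A ∩ P i := by
          intro u hu
          rw [Finset.mem_inter] at hu ⊢
          obtain ⟨hu1, hu2⟩ := hu
          refine ⟨hu2, ?_⟩
          rw [SimpleGraph.mem_neighborFinset] at hu1
          obtain ⟨j, hvj, huj⟩ := hedges v u hu1
          rcases eq_or_ne i j with rfl | hij
          · exact huj
          · exact absurd hvj (Finset.disjoint_left.1 (hdisj i j hij) hvP)
        have hcc := Finset.card_le_card hsub
        rw [ih] at hcc
        omega
      rw [hempty, Finset.union_empty]
  have hfin := key t
  rw [ht, Finset.univ_inter] at hfin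
  have := hPcard i
  rw [hfin] at this
  omega

theorem stmt_4 (r l : ℕ) (hr : 1 ≤ r) (hrl : r ≤ l) :
    (∀ (V : Type) [Fintype V] [DecidableEq V] (G : SimpleGraph V)
        [DecidableRel G.Adj] (P : Fin (l / r + 1) → Finset V),
      (∀ i, r ≤ (P i).card) →
      (∀ i, G.IsClique (↑(P i) : Set V)) →
      (∀ i j, i ≠ j → Disjoint (P i) (P j)) →
      (Finset.univ.biUnion P = Finset.univ) →
      (∀ x y, G.Adj x y → ∃ i, x ∈ P i ∧ y ∈ P i) →
      ∀ A₀ : Finset V, A₀.card = l → ¬ percolates G r A₀) ∧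
    (∃ N : ℕ, ∀ n, N ≤ n → n / (l / r + 1) ≤ delta0 n r l) := by
  constructor
  · intro V _ _ G _ P hPcard _ hdisj _ hedges A₀ hA₀
    exact part1_aux G r l hr P hPcard hdisj hedges A₀ hA₀
  · set m := l / r + 1 with hm
    refine ⟨m * r, fun n hn => ?_⟩
    have hm1 : 1 ≤ m := Nat.succ_le_succ (Nat.zero_le _)
    have hn1 : 1 ≤ n := le_trans (Nat.mul_pos hm1 hr) hn
    set q := n / m with hq
    have hqr : r ≤ q := (Nat.le_div_iff_mul_le (by omega)).2 (by rw [Nat.mul_comm]; exact hn)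
    have hq1 : 1 ≤ q := le_trans hr hqr
    have hmqn : m * q ≤ n := Nat.mul_div_le n m
    -- the witness graph
    set b : Fin n → Fin m := fun v => ⟨min (v.val / q) (m - 1), by omega⟩ with hb
    set G : SimpleGraph (Fin n) :=
      { Adj := fun x y => x ≠ y ∧ b x = b y
        symm := by constructor; intro x y ⟨h1, h2⟩; exact ⟨h1.symm, h2.symm⟩
        loopless := by constructor; intro x ⟨h1, _⟩; exact h1 rfl } with hG
    have instG : DecidableRel G.Adj := fun x y => by
      rw [hG]; exact instDecidableAnd
    set P : Fin m → Finset (Fin n) := fun i => Finset.univ.filter fun v => b v = i with hP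
    have hbmem : ∀ v, v ∈ P (b v) := fun v => by simp [hP]
    have hPcard : ∀ i, q ≤ (P i).card := by
      intro i
      have : (Finset.Ico (i.val * q) (i.val * q + q)).card ≤ (P i).card := by
        apply Finset.card_le_card_of_injOn (fun x => (⟨x % n, Nat.mod_lt x hn1⟩ : Fin n))
        · intro x hx
          rw [Finset.mem_coe, Finset.mem_Ico] at hx; rw [Finset.mem_coe]
          have hxn : x < n := by
            calc x < i.val * q + q := hx.2
              _ = (i.val + 1) * q := by ring
              _ ≤ m * q := Nat.mul_le_mul_right q (by omega)
              _ ≤ n := hmqn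
          have hxmod : x % n = x := Nat.mod_eq_of_lt hxn
          rw [hP]
          simp only [Finset.mem_filter, Finset.mem_univ, true_and]
          rw [hb]
          apply Fin.ext
          simp only [hxmod]
          have hdiv : x / q = i.val :=
            Nat.div_eq_of_lt_le hx.1 (by rw [add_mul, one_mul]; exact hx.2)
          rw [hdiv]
          have : i.val ≤ m - 1 := by omega
          exact min_eq_left this
        · intro x hx y hy hxy
          simp only [Finset.coe_Ico, Set.mem_Ico] at hx hy
          have hbound : i.val * q + q ≤ n := by
            calc i.val * q + q = (i.val + 1) * q := by ring
              _ ≤ m * q := Nat.mul_le_mul_right q (by omega)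
              _ ≤ n := hmqn
          have hxn : x < n := lt_of_lt_of_le hx.2 hbound
          have hyn : y < n := lt_of_lt_of_le hy.2 hbound
          have h := congrArg Fin.val hxy
          simpa [Nat.mod_eq_of_lt hxn, Nat.mod_eq_of_lt hyn] using h
      simpa using this
    have hdisjP : ∀ i j, i ≠ j → Disjoint (P i) (P j) := by
      intro i j hij
      rw [Finset.disjoint_left]
      intro v hvi hvj
      rw [hP] at hvi hvj
      simp only [Finset.mem_filter] at hvi hvj
      exact hij (hvi.2 ▸ hvj.2)
    have hedges : ∀ x y, G.Adj x y → ∃ i, x ∈ P i ∧ y ∈ P i := by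
      intro x y hxy
      rw [hG] at hxy
      exact ⟨b x, hbmem x, by rw [hxy.2]; exact hbmem y⟩
    have hnbr : ∀ v, G.neighborFinset v = (P (b v)).erase v := by
      intro v
      ext u
      rw [SimpleGraph.mem_neighborFinset, Finset.mem_erase, hG, hP]
      simp only [Finset.mem_filter, Finset.mem_univ, true_and]
      constructor
      · rintro ⟨h1, h2⟩; exact ⟨h1.symm, h2.symm⟩
      · rintro ⟨h1, h2⟩; exact ⟨h1.symm, h2.symm⟩
    have hdeg : ∀ v, q - 1 ≤ G.degree v := by
      intro v
      rw [SimpleGraph.degree, hnbr v, Finset.card_erase_of_mem (hbmem v)]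
      have := hPcard (b v)
      omega
    -- now the sInf bound
    rw [delta0]
    apply le_csInf
    · refine ⟨n, fun G' instG' hmin => ?_⟩
      exfalso
      have : Nonempty (Fin n) := ⟨⟨0, hn1⟩⟩
      have h1 := G'.minDegree_le_degree (Classical.arbitrary (Fin n))
      have h2 := G'.degree_lt_card_verts (Classical.arbitrary (Fin n))
      rw [Fintype.card_fin] at h2
      omega
    · intro D hD
      by_contra hcon
      push_neg at hcon
      have hmin : D ≤ G.minDegree := by
        have : Nonempty (Fin n) := ⟨⟨0, hn1⟩⟩
        refine le_trans ?_ (G.le_minDegree_of_forall_le_degree (q - 1) hdeg)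
        omega
      obtain ⟨A₀, hA₀, hperc⟩ := hD G instG hmin
      exact part1_aux G r l hr P (fun i => le_trans hqr (hPcard i)) hdisjP hedges A₀ hA₀ hperc
end

section
/- Let G be a graph on n vertices, r ≥ 1, and let A ⊆ V(G) be a closed set for the r-neighbour bootstrap process with |A| = a and l ≤ a < n, where A contains a non-percolating initial set of size l. Then there exists a vertex x ∈ A whose degree in G is at most (r−1)·n/a + a − r. -/
open Finset

theorem stmt_5 {V : Type*} [Fintype V] [DecidableEq V]
    (G : SimpleGraph V) [DecidableRel G.Adj] (r l : ℕ)
    (hr : 1 ≤ r) (hrl : r ≤ l)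
    (A : Finset V) (hclosed : bootStep G r A = A)
    (hla : l ≤ A.card) (hAn : A.card < Fintype.card V)
    (hsub : ∃ A₀ ⊆ A, A₀.card = l ∧ ¬ percolates G r A₀) :
    ∃ x ∈ A, (G.degree x : ℝ) ≤
      ((r : ℝ) - 1) * (Fintype.card V) / (A.card) + (A.card) - r := by

  classical
  have ha : 1 ≤ A.card := le_trans hr (le_trans hrl hla)
  have hApos : (0:ℝ) < (A.card : ℝ) := by exact_mod_cast ha
  -- every vertex outside A has at most r-1 neighbours in A
  have hclose : ∀ y ∉ A, ((G.neighborFinset y) ∩ A).card ≤ r - 1 := by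
    intro y hy
    by_contra h
    push_neg at h
    have hry : r ≤ ((G.neighborFinset y) ∩ A).card := by omega
    apply hy
    rw [← hclosed]
    exact Finset.mem_union_right _ (Finset.mem_filter.mpr ⟨Finset.mem_univ _, hry⟩)
  -- double counting
  have hswap : ∑ x ∈ A, ((G.neighborFinset x) \ A).card
      = ∑ y ∈ Aᶜ, ((G.neighborFinset y) ∩ A).card := by
    have h1 : ∀ x : V, (G.neighborFinset x) \ A = Aᶜ.filter (G.Adj x) := by
      intro x; ext y
      simp [SimpleGraph.mem_neighborFinset, and_comm]
    have h2 : ∀ y : V, (G.neighborFinset y) ∩ A = A.filter (G.Adj y) := by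
      intro y; ext x
      simp [SimpleGraph.mem_neighborFinset, and_comm]
    simp only [h1, h2, Finset.card_filter]
    rw [Finset.sum_comm]
    exact Finset.sum_congr rfl fun y _ => Finset.sum_congr rfl fun x _ => by
      simp only [G.adj_comm]
  -- sum of degrees bound (natural numbers)
  have hsum : ∑ x ∈ A, G.degree x ≤ A.card * (A.card - 1) + Aᶜ.card * (r - 1) := by
    have hdeg : ∀ x ∈ A, G.degree x
        = ((G.neighborFinset x) ∩ A).card + ((G.neighborFinset x) \ A).card := by
      intro x _
      rw [SimpleGraph.degree, ← Finset.card_inter_add_card_sdiff (G.neighborFinset x) A]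
    calc ∑ x ∈ A, G.degree x
        = ∑ x ∈ A, ((G.neighborFinset x) ∩ A).card
          + ∑ x ∈ A, ((G.neighborFinset x) \ A).card := by
          rw [← Finset.sum_add_distrib]; exact Finset.sum_congr rfl hdeg
      _ ≤ A.card * (A.card - 1) + Aᶜ.card * (r - 1) := by
          gcongr
          · calc ∑ x ∈ A, ((G.neighborFinset x) ∩ A).card
                ≤ ∑ _x ∈ A, (A.card - 1) := by
                  apply Finset.sum_le_sum
                  intro x hx
                  have hsub2 : (G.neighborFinset x) ∩ A ⊆ A.erase x := by
                    intro y hy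
                    rw [Finset.mem_erase]
                    rcases Finset.mem_inter.mp hy with ⟨hy1, hy2⟩
                    exact ⟨fun h => G.loopless.irrefl x (h ▸ (G.mem_neighborFinset x y).mp hy1), hy2⟩
                  calc ((G.neighborFinset x) ∩ A).card ≤ (A.erase x).card :=
                        Finset.card_le_card hsub2
                    _ = A.card - 1 := Finset.card_erase_of_mem hx
              _ = A.card * (A.card - 1) := by rw [Finset.sum_const, smul_eq_mul]
          · rw [hswap]
            calc ∑ y ∈ Aᶜ, ((G.neighborFinset y) ∩ A).card
                ≤ ∑ _y ∈ Aᶜ, (r - 1) := Finset.sum_le_sum fun y hy =>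
                  hclose y (Finset.mem_compl.mp hy)
              _ = Aᶜ.card * (r - 1) := by rw [Finset.sum_const, smul_eq_mul]
  -- pass to reals
  set n : ℕ := Fintype.card V with hn
  set a : ℕ := A.card with haa
  have hcompl : Aᶜ.card = n - a := by
    rw [Finset.card_compl]
  have hsumR : ∑ x ∈ A, (G.degree x : ℝ)
      ≤ ∑ _x ∈ A, (((r : ℝ) - 1) * n / a + a - r) := by
    rw [Finset.sum_const, nsmul_eq_mul]
    have h1 : (∑ x ∈ A, (G.degree x : ℝ))
        = ((∑ x ∈ A, G.degree x : ℕ) : ℝ) := by push_cast; ring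
    rw [h1]
    have h2 : ((∑ x ∈ A, G.degree x : ℕ) : ℝ)
        ≤ ((a * (a - 1) + Aᶜ.card * (r - 1) : ℕ) : ℝ) := by exact_mod_cast hsum
    refine h2.trans (le_of_eq ?_)
    rw [hcompl]
    have han : a ≤ n := le_of_lt hAn
    push_cast [Nat.cast_sub ha, Nat.cast_sub hr, Nat.cast_sub han]
    field_simp
    ring
  obtain ⟨x, hx, hxle⟩ := Finset.exists_le_of_sum_le ⟨_, Finset.card_pos.mp (lt_of_lt_of_le Nat.one_pos ha) |>.choose_spec⟩ hsumR
  exact ⟨x, hx, hxle⟩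
end

section
/- Let a > 0 be a real number, r ≥ 2, l with r ≤ l ≤ 2r−2, and n ≥ l a natural number. Define d(a) = ((r−1)/a)·n + a − r. If l ≤ a ≤ ⌈((l−r+1)/l)·n⌉ + 2r − l − 3, then d(a) ≤ d(l) = ((r−1)/l)·n + l − r. -/
theorem stmt_6 (r l n : ℕ) (hr : 2 ≤ r) (hrl : r ≤ l) (hl : l ≤ 2 * r - 2)
    (hn : l ≤ n) (a : ℝ) (ha : 0 < a) (hal : (l : ℝ) ≤ a)
    (hau : a ≤ (⌈(((l : ℝ) - r + 1) / l) * n⌉ : ℝ) + 2 * r - l - 3) :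
    ((r : ℝ) - 1) / a * n + a - r ≤ ((r : ℝ) - 1) / l * n + l - r := by
  have hlpos : 0 < l := by omega
  have hl0 : (0:ℝ) < l := by exact_mod_cast hlpos
  have hn' : (l:ℝ) ≤ n := by exact_mod_cast hn
  have hlr : (l:ℝ) + 2 ≤ 2 * r := by
    have : l + 2 ≤ 2 * r := by omega
    exact_mod_cast this
  have hceil : (⌈(((l : ℝ) - r + 1) / l) * n⌉ : ℝ) < (((l : ℝ) - r + 1) / l) * n + 1 :=
    Int.ceil_lt_add_one _
  -- a ≤ (r-1)*n / l, i.e. a*l ≤ (r-1)*n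
  have hu : a * l ≤ ((r:ℝ) - 1) * n := by
    have h1 : a ≤ (((l : ℝ) - r + 1) / l) * n + 2 * r - l - 2 := by linarith
    have h2 : a * l ≤ ((l : ℝ) - r + 1) * n + (2 * r - l - 2) * l := by
      have := mul_le_mul_of_nonneg_right h1 hl0.le
      have hd : (((l : ℝ) - r + 1) / l) * n * l = ((l : ℝ) - r + 1) * n := by
        field_simp
      nlinarith [this]
    -- (2r-2-l)*(n-l) ≥ 0
    nlinarith [mul_nonneg (by linarith : (0:ℝ) ≤ 2*r - 2 - l) (by linarith : (0:ℝ) ≤ (n:ℝ) - l)]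
  have key : ((r : ℝ) - 1) / a * n + a ≤ ((r : ℝ) - 1) / l * n + l := by
    rw [div_mul_eq_mul_div, div_mul_eq_mul_div, div_add' _ _ _ (ne_of_gt ha),
        div_add' _ _ _ (ne_of_gt hl0), div_le_div_iff₀ ha hl0]
    nlinarith [mul_nonneg (by linarith : (0:ℝ) ≤ a - l) (by linarith : (0:ℝ) ≤ ((r:ℝ)-1)*n - a*l)]
  linarith
end

section
/- Let G be a graph on n vertices, r, m ∈ ℕ with r ≥ 1, such that every pair of non-adjacent vertices x, y satisfies deg(x) + deg(y) ≥ n + 2r − m. Let A ⊆ V(G) be a closed set for the r-neighbour bootstrap process with r ≤ |A| < n. Then every vertex x ∈ A has at least r − m + 3 neighbours in V(G) \ A; moreover if x is not adjacent to all vertices of V(G) \ A, then deg_{Aᶜ}(x) ≥ r − m + 3 + (number of non-neighbours of x inside A). -/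
open Finset

section Aux
variable {V : Type*} [Fintype V] [DecidableEq V]

lemma inter_compl_card (s A : Finset V) :
    (s ∩ A).card + (s ∩ Aᶜ).card = s.card := by
  have h : s ∩ Aᶜ = s \ A := by ext z; simp
  rw [h, Finset.card_inter_add_card_sdiff]

end Aux

theorem stmt_7 {V : Type*} [Fintype V] [DecidableEq V]
    (G : SimpleGraph V) [DecidableRel G.Adj] (r m : ℕ) (hr : 1 ≤ r)
    (hOre : ∀ x y, x ≠ y → ¬ G.Adj x y →
      (Fintype.card V : ℤ) + 2 * r - m ≤ (G.degree x : ℤ) + (G.degree y : ℤ))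
    (A : Finset V) (hclosed : bootStep G r A = A)
    (hrA : r ≤ A.card) (hAn : A.card < Fintype.card V)
    (x : V) (hx : x ∈ A) :
    ((r : ℤ) - m + 3 ≤ (((G.neighborFinset x) ∩ Aᶜ).card : ℤ)) ∧
    ((∃ y ∈ Aᶜ, ¬ G.Adj x y) →
      (r : ℤ) - m + 3 + (((A.erase x).filter fun y => ¬ G.Adj x y).card : ℤ) ≤
        (((G.neighborFinset x) ∩ Aᶜ).card : ℤ)) := by
  classical
  have hccard : Aᶜ.card = Fintype.card V - A.card := Finset.card_compl A
  -- closedness: vertices outside A have < r neighbours in A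
  have hcl : ∀ y : V, y ∉ A → (G.neighborFinset y ∩ A).card < r := by
    intro y hy
    by_contra h
    push_neg at h
    apply hy
    rw [← hclosed]
    exact Finset.mem_union_right _ (Finset.mem_filter.mpr ⟨Finset.mem_univ _, h⟩)
  -- degree decomposition
  have hsplit : ∀ v : V, ((G.neighborFinset v ∩ A).card : ℤ)
      + ((G.neighborFinset v ∩ Aᶜ).card : ℤ) = G.degree v := by
    intro v
    rw [← SimpleGraph.card_neighborFinset_eq_degree]
    exact_mod_cast congrArg (Nat.cast (R := ℤ)) (inter_compl_card _ A)
  -- second part first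
  have part2 : (∃ y ∈ Aᶜ, ¬ G.Adj x y) →
      (r : ℤ) - m + 3 + (((A.erase x).filter fun y => ¬ G.Adj x y).card : ℤ) ≤
        (((G.neighborFinset x) ∩ Aᶜ).card : ℤ) := by
    rintro ⟨y, hyA, hnadj⟩
    rw [Finset.mem_compl] at hyA
    have hxy : x ≠ y := fun h => hyA (h ▸ hx)
    have hore := hOre x y hxy hnadj
    -- bound deg y
    have hyAlt : (G.neighborFinset y ∩ A).card < r := hcl y hyA
    have hyAc : (G.neighborFinset y ∩ Aᶜ).card ≤ Aᶜ.card - 1 := by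
      have : G.neighborFinset y ∩ Aᶜ ⊆ Aᶜ.erase y := by
        intro z hz
        rw [Finset.mem_inter] at hz
        exact Finset.mem_erase.mpr ⟨fun h => (G.notMem_neighborFinset_self y)
          (h ▸ hz.1), hz.2⟩
      calc (G.neighborFinset y ∩ Aᶜ).card ≤ (Aᶜ.erase y).card := Finset.card_le_card this
        _ = Aᶜ.card - 1 := Finset.card_erase_of_mem (Finset.mem_compl.mpr hyA)
    -- bound (N x ∩ A).card
    have hxA : (G.neighborFinset x ∩ A).card
        + ((A.erase x).filter fun z => ¬ G.Adj x z).card = A.card - 1 := by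
      have h1 : G.neighborFinset x ∩ A = (A.erase x).filter fun z => G.Adj x z := by
        ext z
        simp only [Finset.mem_inter, SimpleGraph.mem_neighborFinset, Finset.mem_filter,
          Finset.mem_erase]
        constructor
        · rintro ⟨h1, h2⟩; exact ⟨⟨fun h => G.irrefl (h ▸ h1), h2⟩, h1⟩
        · rintro ⟨⟨_, h2⟩, h3⟩; exact ⟨h3, h2⟩
      rw [h1, Finset.card_filter_add_card_filter_not,
        Finset.card_erase_of_mem hx]
    have hdx := hsplit x
    have hdy := hsplit y
    have hApos : 1 ≤ A.card := le_trans hr hrA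
    have hcpos : 1 ≤ Aᶜ.card := by
      rw [hccard]; omega
    have hle : A.card ≤ Fintype.card V := le_of_lt hAn
    -- cast everything
    have hxAz : ((G.neighborFinset x ∩ A).card : ℤ)
        + (((A.erase x).filter fun z => ¬ G.Adj x z).card : ℤ) = (A.card : ℤ) - 1 := by
      have := congrArg (Nat.cast (R := ℤ)) hxA
      push_cast at this
      omega
    have hyAcz : ((G.neighborFinset y ∩ Aᶜ).card : ℤ) ≤ (Fintype.card V : ℤ) - A.card - 1 := by
      have := hyAc
      have h2 : ((G.neighborFinset y ∩ Aᶜ).card : ℤ) ≤ (Aᶜ.card : ℤ) - 1 := by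
        omega
      rw [hccard] at h2
      push_cast [Nat.cast_sub hle] at h2
      omega
    have hyAlz : ((G.neighborFinset y ∩ A).card : ℤ) ≤ (r : ℤ) - 1 := by
      have h : ((G.neighborFinset y ∩ A).card : ℤ) < r := by exact_mod_cast hyAlt
      omega
    linarith
  refine ⟨?_, part2⟩
  by_cases hall : ∃ y ∈ Aᶜ, ¬ G.Adj x y
  · have := part2 hall
    have : (0 : ℤ) ≤ (((A.erase x).filter fun y => ¬ G.Adj x y).card : ℤ) := by positivity
    linarith [part2 hall]
  · -- x adjacent to all of Aᶜ
    push_neg at hall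
    have hAcne : Aᶜ.Nonempty := by
      rw [← Finset.card_pos, hccard]; omega
    obtain ⟨y, hy⟩ := hAcne
    have hadj : Aᶜ ⊆ G.neighborFinset x ∩ Aᶜ := by
      intro z hz
      exact Finset.mem_inter.mpr ⟨(SimpleGraph.mem_neighborFinset G x z).mpr (hall z hz), hz⟩
    have hcard : Aᶜ.card ≤ (G.neighborFinset x ∩ Aᶜ).card := Finset.card_le_card hadj
    -- find z ∈ A nonadjacent to y
    have hyA : y ∉ A := Finset.mem_compl.mp hy
    have hylt := hcl y hyA
    have hsub : ¬ (A ⊆ G.neighborFinset y ∩ A) := by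
      intro hs
      have := Finset.card_le_card hs
      omega
    obtain ⟨z, hzA, hzn⟩ := Finset.not_subset.mp hsub
    have hzny : ¬ G.Adj z y := by
      intro h
      exact hzn (Finset.mem_inter.mpr ⟨(SimpleGraph.mem_neighborFinset G y z).mpr h.symm, hzA⟩)
    have hzy : z ≠ y := fun h => hyA (h ▸ hzA)
    have hore := hOre z y hzy hzny
    have hdz : (G.degree z : ℤ) ≤ (Fintype.card V : ℤ) - 1 := by
      have := SimpleGraph.degree_lt_card_verts (G := G) z
      omega
    have hdy := hsplit y
    have hyAcc : (G.neighborFinset y ∩ Aᶜ).card ≤ Aᶜ.card - 1 := by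
      have hsb : G.neighborFinset y ∩ Aᶜ ⊆ Aᶜ.erase y := by
        intro w hw
        rw [Finset.mem_inter] at hw
        exact Finset.mem_erase.mpr ⟨fun h => (G.notMem_neighborFinset_self y)
          (h ▸ hw.1), hw.2⟩
      calc (G.neighborFinset y ∩ Aᶜ).card ≤ (Aᶜ.erase y).card := Finset.card_le_card hsb
        _ = Aᶜ.card - 1 := Finset.card_erase_of_mem hy
    have hyAlz : ((G.neighborFinset y ∩ A).card : ℤ) ≤ (r : ℤ) - 1 := by
      have h : ((G.neighborFinset y ∩ A).card : ℤ) < r := by exact_mod_cast hylt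
      omega
    have hle : A.card ≤ Fintype.card V := le_of_lt hAn
    have hcz : ((Aᶜ.card : ℤ)) = (Fintype.card V : ℤ) - A.card := by
      rw [hccard]; push_cast [Nat.cast_sub hle]; ring
    have hyAcz : ((G.neighborFinset y ∩ Aᶜ).card : ℤ) ≤ (Aᶜ.card : ℤ) - 1 := by
      have hcpos : 1 ≤ Aᶜ.card := Finset.card_pos.mpr ⟨y, hy⟩
      omega
    have hcf : ((G.neighborFinset x ∩ Aᶜ).card : ℤ) ≥ (Aᶜ.card : ℤ) := by
      exact_mod_cast hcard
    linarith
end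

section
/- Let G be the disjoint union of two cliques of sizes ⌊n/2⌋ and ⌈n/2⌉ with n ≥ 2r+2 and r ≥ 1. Then G has minimum degree ⌊n/2⌋ − 1 and has no percolating set of any size s < 2r for the r-neighbour bootstrap process. -/
open Finset

theorem stmt_12 {V : Type*} [Fintype V] [DecidableEq V]
    (G : SimpleGraph V) [DecidableRel G.Adj] (r n : ℕ)
    (hr : 1 ≤ r) (hn : Fintype.card V = n) (hn2 : 2 * r + 2 ≤ n)
    (A B : Finset V) (hdisj : Disjoint A B) (hcover : A ∪ B = Finset.univ)
    (hA : A.card = n / 2)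
    (hadj : ∀ x y, G.Adj x y ↔ x ≠ y ∧ ((x ∈ A ∧ y ∈ A) ∨ (x ∈ B ∧ y ∈ B))) :
    G.minDegree = n / 2 - 1 ∧
    ∀ s, s < 2 * r → ∀ A₀ : Finset V, A₀.card = s → ¬ percolates G r A₀ := by
  have hABcard : A.card + B.card = n := by
    rw [← Finset.card_union_of_disjoint hdisj, hcover, Finset.card_univ, hn]
  have hBcard : B.card = n - n / 2 := by omega
  have hA1 : r + 1 ≤ A.card := by rw [hA]; omega
  have hB1 : r + 1 ≤ B.card := by omega
  have hnotB : ∀ v ∈ A, v ∉ B := fun v hv => Finset.disjoint_left.mp hdisj hv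
  have hnotA : ∀ v ∈ B, v ∉ A := fun v hv => Finset.disjoint_right.mp hdisj hv
  have hnA : ∀ v ∈ A, G.neighborFinset v = A.erase v := by
    intro v hv
    ext y
    simp only [SimpleGraph.mem_neighborFinset, hadj, Finset.mem_erase]
    have := hnotB v hv
    constructor
    · rintro ⟨hne, h | h⟩
      · exact ⟨fun h' => hne h'.symm, h.2⟩
      · exact absurd h.1 this
    · rintro ⟨hne, hy⟩; exact ⟨fun h' => hne h'.symm, Or.inl ⟨hv, hy⟩⟩
  have hnB : ∀ v ∈ B, G.neighborFinset v = B.erase v := by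
    intro v hv
    ext y
    simp only [SimpleGraph.mem_neighborFinset, hadj, Finset.mem_erase]
    have := hnotA v hv
    constructor
    · rintro ⟨hne, h | h⟩
      · exact absurd h.1 this
      · exact ⟨fun h' => hne h'.symm, h.2⟩
    · rintro ⟨hne, hy⟩; exact ⟨fun h' => hne h'.symm, Or.inr ⟨hv, hy⟩⟩
  have hne : Nonempty V := by
    rw [← Fintype.card_pos_iff, hn]; omega
  obtain ⟨a, ha⟩ : A.Nonempty := Finset.card_pos.mp (by omega)
  constructor
  · apply le_antisymm
    · calc G.minDegree ≤ G.degree a := G.minDegree_le_degree a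
        _ = n / 2 - 1 := by
          rw [SimpleGraph.degree, hnA a ha, Finset.card_erase_of_mem ha, hA]
    · apply SimpleGraph.le_minDegree_of_forall_le_degree
      intro v
      have hv : v ∈ A ∪ B := by rw [hcover]; exact Finset.mem_univ v
      rcases Finset.mem_union.mp hv with h | h
      · rw [SimpleGraph.degree, hnA v h, Finset.card_erase_of_mem h, hA]
      · rw [SimpleGraph.degree, hnB v h, Finset.card_erase_of_mem h]
        omega
  · -- no percolating set of size < 2r
    have key : ∀ C : Finset V, (∀ v ∈ C, G.neighborFinset v ⊆ C) →
        ∀ S : Finset V, (S ∩ C).card < r →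
        ∀ t, ((bootStep G r)^[t] S) ∩ C = S ∩ C := by
      intro C hC S hS t
      induction t with
      | zero => rfl
      | succ t ih =>
        rw [Function.iterate_succ_apply']
        set T := (bootStep G r)^[t] S with hT
        ext v
        simp only [bootStep, Finset.mem_inter, Finset.mem_union, Finset.mem_filter,
          Finset.mem_univ, true_and]
        constructor
        · rintro ⟨hv | hv, hvC⟩
          · have h := ih ▸ Finset.mem_inter.mpr ⟨hv, hvC⟩
            exact Finset.mem_inter.mp h
          · exfalso
            have hsub : G.neighborFinset v ∩ T ⊆ T ∩ C := by
              intro x hx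
              rcases Finset.mem_inter.mp hx with ⟨hx1, hx2⟩
              exact Finset.mem_inter.mpr ⟨hx2, hC v hvC hx1⟩
            have := Finset.card_le_card hsub
            rw [ih] at this
            omega
        · intro hv
          have h : v ∈ T ∩ C := ih.symm ▸ (Finset.mem_inter.mpr hv)
          rcases Finset.mem_inter.mp h with ⟨h1, h2⟩
          exact ⟨Or.inl h1, h2⟩
    intro s hs A₀ hcard ⟨t, ht⟩
    have hsplit : (A₀ ∩ A).card + (A₀ ∩ B).card = s := by
      rw [← hcard, ← Finset.card_union_of_disjoint
        (Finset.disjoint_left.mpr fun x hx hx' =>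
          hnotB x (Finset.mem_inter.mp hx).2 (Finset.mem_inter.mp hx').2),
        ← Finset.inter_union_distrib_left, hcover, Finset.inter_univ]
    have hnsubA : ∀ v ∈ A, G.neighborFinset v ⊆ A := fun v hv => by
      rw [hnA v hv]; exact Finset.erase_subset v A
    have hnsubB : ∀ v ∈ B, G.neighborFinset v ⊆ B := fun v hv => by
      rw [hnB v hv]; exact Finset.erase_subset v B
    have final : ∀ C : Finset V, (∀ v ∈ C, G.neighborFinset v ⊆ C) →
        r + 1 ≤ C.card → (A₀ ∩ C).card < r → False := by
      intro C hC hCcard hlt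
      have := key C hC A₀ hlt t
      rw [ht, Finset.univ_inter] at this
      have h2 := congrArg Finset.card this
      omega
    rcases lt_or_ge (A₀ ∩ A).card r with h | h
    · exact final A hnsubA hA1 h
    · exact final B hnsubB hB1 (by omega)
end

section
/- Let U and W be the parts of a bipartite graph H of girth at least 2f(l−r)+2 in which every vertex of U has degree 2r−l−f(l−r) toward W, where l ≥ r and 3r ≥ 2l+f(l−r)+4. Let u₁,…,u_{f(l−r)} ∈ U be distinct and let S be a set of infected vertices in W with the property that at the moment of its infection, u_i has at least |W₀| − (l−r) − i + 1 infected neighbours in W_{t−1}, where W₀ ⊆ W has size l−r+f(l−r) and W_{t−1} ⊇ W₀. Then |W_{t−1}| > |W₀| + (f(l−r)−1)(|W₀| − (l−r) − f(l−r)). -/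
open Finset

section Helpers
open SimpleGraph

variable {α : Type*} [Fintype α] [DecidableEq α] [LinearOrder α] (G : SimpleGraph α)
set_option linter.unusedSectionVars false

noncomputable def comp' (v : α) : Finset α := (Set.toFinite {w | G.Reachable v w}).toFinset

lemma mem_comp' {v w : α} : w ∈ comp' G v ↔ G.Reachable v w := Set.Finite.mem_toFinset _

lemma comp'_nonempty (v : α) : (comp' G v).Nonempty := ⟨v, (mem_comp' G).2 (Reachable.refl v)⟩

noncomputable def root' (v : α) : α := (comp' G v).min' (comp'_nonempty G v)

lemma reachable_root' (v : α) : G.Reachable v (root' G v) :=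
  (mem_comp' G).1 ((comp' G v).min'_mem _)

lemma root'_congr {v w : α} (h : G.Reachable v w) : root' G v = root' G w := by
  have hc : comp' G v = comp' G w := by
    ext x
    simp only [mem_comp']
    exact ⟨fun h' => h.symm.trans h', fun h' => h.trans h'⟩
  simp only [root', hc]

lemma root'_root' (v : α) : root' G (root' G v) = root' G v :=
  (root'_congr G (reachable_root' G v)).symm

noncomputable def pathTo' (v : α) : G.Path v (root' G v) := ((reachable_root' G v).some).toPath

noncomputable def par' (v : α) : α := (pathTo' G v : G.Walk v (root' G v)).getVert 1

lemma getVert_one_eq (hG : G.IsAcyclic) {v z : α} (hz : z = root' G v) (q : G.Walk v z)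
    (hq : q.IsPath) : par' G v = q.getVert 1 := by
  subst hz
  have h := hG.path_unique (pathTo' G v) ⟨q, hq⟩
  show (pathTo' G v : G.Walk v (root' G v)).getVert 1 = q.getVert 1
  rw [h]

lemma par'_eq_self_of_root (hG : G.IsAcyclic) {v : α} (h : root' G v = v) : par' G v = v := by
  have key : ∀ (z : α), z = v → ∀ (q : G.Walk v z), q.IsPath → q.getVert 1 = v := by
    intro z hz q hq
    subst hz
    have h2 : q = Walk.nil := congrArg Subtype.val (Path.loop_eq (⟨q, hq⟩ : G.Path _ _))
    subst h2
    rfl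
  exact key (root' G v) h (pathTo' G v).1 (pathTo' G v).2

lemma par'_dichotomy (hG : G.IsAcyclic) {x y : α} (hxy : G.Adj x y) :
    par' G x = y ∨ par' G y = x := by
  by_cases hy : y ∈ ((pathTo' G x : G.Walk x (root' G x))).support
  · left
    have hp' : (pathTo' G x : G.Walk x (root' G x)).IsPath := (pathTo' G x).2
    have hpath1 : ((pathTo' G x : G.Walk x (root' G x)).takeUntil y hy).IsPath :=
      hp'.takeUntil hy
    have hpath2 : (Walk.cons hxy Walk.nil).IsPath := by
      simp [Walk.isPath_def, hxy.ne]
    have h1 : (pathTo' G x : G.Walk x (root' G x)).takeUntil y hy = Walk.cons hxy Walk.nil :=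
      congrArg Subtype.val (hG.path_unique ⟨_, hpath1⟩ ⟨_, hpath2⟩)
    have h2 : (pathTo' G x : G.Walk x (root' G x))
        = Walk.cons hxy ((pathTo' G x : G.Walk x (root' G x)).dropUntil y hy) := by
      conv_lhs => rw [← Walk.take_spec _ hy, h1]
      rw [Walk.cons_append, Walk.nil_append]
    show (pathTo' G x : G.Walk x (root' G x)).getVert 1 = y
    rw [h2]
    simp [Walk.getVert_cons_succ, Walk.getVert_zero]
  · right
    have hr : root' G x = root' G y := root'_congr G hxy.reachable
    have hcons : (Walk.cons hxy.symm (pathTo' G x : G.Walk x (root' G x))).IsPath :=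
      (pathTo' G x).2.cons hy
    have := getVert_one_eq G hG hr (Walk.cons hxy.symm (pathTo' G x : G.Walk x (root' G x))) hcons
    rw [this]
    simp [Walk.getVert_cons_succ, Walk.getVert_zero]

lemma mem_of_reachable' {s : Finset α} (hE : ∀ ⦃x y : α⦄, G.Adj x y → x ∈ s) :
    ∀ {v w : α}, G.Walk v w → v ∈ s → w ∈ s := by
  intro v w p
  induction p with
  | nil => exact id
  | cons h q ih => exact fun _ => ih (hE h.symm)

lemma forest_bound [DecidableRel G.Adj] (hG : G.IsAcyclic) (s : Finset α) (hs : s.Nonempty)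
    (hE : ∀ ⦃x y : α⦄, G.Adj x y → x ∈ s) : G.edgeFinset.card + 1 ≤ s.card := by
  obtain ⟨x₀, hx₀⟩ := hs
  set r₀ := root' G x₀ with hr₀
  have hr₀s : r₀ ∈ s := mem_of_reachable' G hE (reachable_root' G x₀).some hx₀
  have hchild : ∀ z w : α, G.Adj z w → par' G z = w → z ≠ r₀ := by
    intro z w hzw hpz hzr
    have hroot : root' G z = z := by
      rw [hzr, hr₀, root'_root']
    rw [par'_eq_self_of_root G hG hroot] at hpz
    exact hzw.ne (hpz ▸ rfl)
  have hsub : G.edgeFinset ⊆ (s.erase r₀).image (fun v => s(v, par' G v)) := by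
    intro e he
    induction e using Sym2.ind with
    | _ x y =>
      rw [mem_edgeFinset, mem_edgeSet] at he
      rcases par'_dichotomy G hG he with h | h
      · exact mem_image.2 ⟨x, mem_erase.2 ⟨hchild x y he h, hE he⟩, by rw [h]⟩
      · refine mem_image.2 ⟨y, mem_erase.2 ⟨hchild y x he.symm h, hE he.symm⟩, ?_⟩
        rw [h, Sym2.eq_swap]
  have h1 : G.edgeFinset.card ≤ s.card - 1 := by
    calc G.edgeFinset.card ≤ ((s.erase r₀).image (fun v => s(v, par' G v))).card :=
          card_le_card hsub
      _ ≤ (s.erase r₀).card := card_image_le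
      _ = s.card - 1 := card_erase_of_mem hr₀s
  have h2 : 1 ≤ s.card := card_pos.2 ⟨x₀, hx₀⟩
  omega

lemma walk_alt {G' : SimpleGraph α} {A : Finset α}
    (halt : ∀ ⦃x y : α⦄, G'.Adj x y → (x ∈ A ↔ y ∉ A)) :
    ∀ {a b : α} (p : G'.Walk a b),
      2 * ((p.support.tail.filter (fun v => v ∈ A)).length : ℤ)
        = p.length + (if b ∈ A then (1:ℤ) else 0) - (if a ∈ A then (1:ℤ) else 0) := by
  intro a b p
  induction p with
  | nil => simp
  | @cons a c b h q ih =>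
    have hac := halt h
    rw [Walk.support_cons, List.tail_cons, Walk.support_eq_cons q, List.filter_cons,
      Walk.length_cons]
    by_cases hc : c ∈ A <;> by_cases ha : a ∈ A <;>
      simp [hc, ha] at hac ih ⊢ <;> push_cast at ih ⊢ <;> omega

lemma cycle_short {G' : SimpleGraph α} {A : Finset α}
    (halt : ∀ ⦃x y : α⦄, G'.Adj x y → (x ∈ A ↔ y ∉ A)) {v : α} (p : G'.Walk v v)
    (hp : p.IsCycle) : p.length ≤ 2 * A.card := by
  have h1 := walk_alt (G' := G') halt p
  simp only [add_sub_cancel_right] at h1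
  have h2 : (p.support.tail.filter (fun v => v ∈ A)).length ≤ A.card := by
    have hnd : (p.support.tail.filter (fun v => v ∈ A)).Nodup := hp.support_nodup.filter _
    calc (p.support.tail.filter (fun v => v ∈ A)).length
        = (p.support.tail.filter (fun v => v ∈ A)).toFinset.card := (List.toFinset_card_of_nodup hnd).symm
      _ ≤ A.card := by
          apply card_le_card
          intro x hx
          simp only [List.mem_toFinset, List.mem_filter] at hx
          simpa using hx.2
  omega

lemma sqrt_half_le (k : ℕ) : (0.5:ℝ) ≤ Real.sqrt (2 * (k : ℝ) + 0.25) := by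
  have h1 : Real.sqrt 0.25 = 0.5 := by
    rw [show (0.25:ℝ) = 0.5^2 by norm_num]
    exact Real.sqrt_sq (by norm_num)
  calc (0.5:ℝ) = Real.sqrt 0.25 := h1.symm
    _ ≤ Real.sqrt (2 * (k : ℝ) + 0.25) := Real.sqrt_le_sqrt (by have := Nat.cast_nonneg (α:=ℝ) k; linarith)

lemma f_three_le (k : ℕ) : 3 ≤ f k := by
  apply Nat.le_floor
  have := sqrt_half_le k
  push_cast
  linarith

lemma f_quad (k : ℕ) : 2 * (k:ℤ) + 2 ≤ ((f k : ℤ) - 1) * ((f k : ℤ) - 2) := by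
  have hx0 : (0:ℝ) ≤ 2 * (k : ℝ) + 0.25 := by positivity
  have hsq := Real.sq_sqrt hx0
  have hnn := Real.sqrt_nonneg (2 * (k : ℝ) + 0.25)
  have h1 : Real.sqrt (2 * (k : ℝ) + 0.25) + 2.5 < (f k : ℝ) + 1 := Nat.lt_floor_add_one _
  have hreal : 2 * (k:ℝ) < ((f k : ℝ) - 1) * ((f k : ℝ) - 2) := by nlinarith
  have hint : 2 * (k:ℤ) < ((f k : ℤ) - 1) * ((f k : ℤ) - 2) := by exact_mod_cast hreal
  obtain ⟨t, ht⟩ := Int.even_mul_succ_self ((f k : ℤ) - 2)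
  have hm : ((f k : ℤ) - 1) * ((f k : ℤ) - 2) = t + t := by
    rw [show ((f k : ℤ) - 1) * ((f k : ℤ) - 2) = ((f k : ℤ)-2) * (((f k : ℤ)-2)+1) by ring]
    exact ht
  have h2t : 2 * (k:ℤ) < t + t := by linarith
  have hkt : k + 1 ≤ t := by omega
  linarith

/-- The union-of-stars graph. -/
def starG {V : Type*} [DecidableEq V] {n : ℕ} (u : Fin n → V) (N : Fin n → Finset V)
    (hsep : ∀ i j, u i ∉ N j) : SimpleGraph V where
  Adj x y := (∃ i, x = u i ∧ y ∈ N i) ∨ (∃ i, y = u i ∧ x ∈ N i)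
  symm := by
    constructor
    rintro x y (⟨i, hx, hy⟩ | ⟨i, hy, hx⟩)
    · exact Or.inr ⟨i, hx, hy⟩
    · exact Or.inl ⟨i, hy, hx⟩
  loopless := by
    constructor
    rintro x (⟨i, rfl, hx⟩ | ⟨i, rfl, hx⟩) <;> exact hsep i i hx

instance starG.instDec {V : Type*} [DecidableEq V] {n : ℕ} (u : Fin n → V)
    (N : Fin n → Finset V) (hsep : ∀ i j, u i ∉ N j) : DecidableRel (starG u N hsep).Adj :=
  fun x y => inferInstanceAs (Decidable ((∃ i, x = u i ∧ y ∈ N i) ∨ (∃ i, y = u i ∧ x ∈ N i)))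


lemma star_count {V : Type*} [Fintype V] [DecidableEq V] (H : SimpleGraph V)
    {n : ℕ} (hn : 0 < n) (u : Fin n → V) (hu : Function.Injective u)
    (N : Fin n → Finset V) (hsep : ∀ i j, u i ∉ N j)
    (hadj : ∀ i w, w ∈ N i → H.Adj (u i) w)
    (T : Finset V) (hNT : ∀ i, N i ⊆ T) (huT : ∀ i, u i ∉ T)
    (hgirth : (2 * (n : ℕ∞) + 2) ≤ H.egirth) :
    (∑ i : Fin n, (N i).card) + 1 ≤ n + T.card := by
  classical
  letI : LinearOrder V := LinearOrder.lift' (Fintype.equivFin V) (Fintype.equivFin V).injective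
  have hle : starG u N hsep ≤ H := by
    intro x y hxy
    rcases hxy with ⟨i, rfl, hy⟩ | ⟨i, rfl, hx⟩
    · exact hadj i y hy
    · exact (hadj i x hx).symm
  have hAcard : (Finset.image u Finset.univ).card = n := by
    rw [card_image_of_injective _ hu, card_univ, Fintype.card_fin]
  have hnotA : ∀ z i, z ∈ N i → z ∉ Finset.image u Finset.univ := by
    intro z i hz hzA
    obtain ⟨j, _, rfl⟩ := mem_image.1 hzA
    exact hsep j i hz
  have halt : ∀ ⦃x y : V⦄, (starG u N hsep).Adj x y →
      (x ∈ Finset.image u Finset.univ ↔ y ∉ Finset.image u Finset.univ) := by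
    intro x y hxy
    rcases hxy with ⟨i, rfl, hy⟩ | ⟨i, rfl, hx⟩
    · exact iff_of_true (mem_image.2 ⟨i, mem_univ i, rfl⟩) (hnotA y i hy)
    · exact iff_of_false (hnotA x i hx) (not_not_intro (mem_image.2 ⟨i, mem_univ i, rfl⟩))
  have hacyc : (starG u N hsep).IsAcyclic := by
    intro v c hc
    have hshort : c.length ≤ 2 * n := by
      have h1 := cycle_short halt c hc
      rwa [hAcard] at h1
    have hcH : (c.mapLe hle).IsCycle := (SimpleGraph.Walk.mapLe_isCycle hle).2 hc
    have hlen := SimpleGraph.le_egirth.1 hgirth v (c.mapLe hle) hcH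
    have hlen2 : (c.mapLe hle).length = c.length := by
      simp [SimpleGraph.Walk.mapLe]
    rw [hlen2] at hlen
    have hlen3 : (2 * n + 2 : ℕ) ≤ c.length := by
      have h2 : ((2 * n + 2 : ℕ) : ℕ∞) ≤ (c.length : ℕ∞) := by push_cast; exact hlen
      exact_mod_cast h2
    omega
  have hdisjA : Disjoint (Finset.image u Finset.univ) T := by
    rw [Finset.disjoint_left]
    intro x hx hxT
    obtain ⟨i, _, rfl⟩ := mem_image.1 hx
    exact huT i hxT
  have hEnd : ∀ ⦃x y : V⦄, (starG u N hsep).Adj x y → x ∈ Finset.image u Finset.univ ∪ T := by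
    intro x y hxy
    rcases hxy with ⟨i, rfl, _⟩ | ⟨i, _, hx⟩
    · exact mem_union_left _ (mem_image.2 ⟨i, mem_univ i, rfl⟩)
    · exact mem_union_right _ (hNT i hx)
  have hsne : (Finset.image u Finset.univ ∪ T).Nonempty :=
    ⟨u ⟨0, hn⟩, mem_union_left _ (mem_image.2 ⟨_, mem_univ _, rfl⟩)⟩
  have hforest := forest_bound (starG u N hsep) hacyc _ hsne hEnd
  have hscard : (Finset.image u Finset.univ ∪ T).card = n + T.card := by
    rw [card_union_of_disjoint hdisjA, hAcard]
  have hbiune : (Finset.univ.biUnion fun i => (N i).image (fun w => s(u i, w)))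
      ⊆ (starG u N hsep).edgeFinset := by
    intro e he
    obtain ⟨i, _, he⟩ := mem_biUnion.1 he
    obtain ⟨w, hw, rfl⟩ := mem_image.1 he
    rw [SimpleGraph.mem_edgeFinset, SimpleGraph.mem_edgeSet]
    exact Or.inl ⟨i, rfl, hw⟩
  have hcardbi : (Finset.univ.biUnion fun i => (N i).image (fun w => s(u i, w))).card
      = ∑ i : Fin n, (N i).card := by
    rw [card_biUnion]
    · refine sum_congr rfl fun i _ => card_image_of_injOn ?_
      intro w hw w' hw' hww
      rcases Sym2.eq_iff.1 hww with ⟨_, h⟩ | ⟨h1, h2⟩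
      · exact h
      · exfalso; exact hsep i i (h1 ▸ hw')
    · intro i _ j _ hij
      rw [Function.onFun, Finset.disjoint_left]
      intro e hei hej
      obtain ⟨w, hw, rfl⟩ := mem_image.1 hei
      obtain ⟨w', hw', he'⟩ := mem_image.1 hej
      rcases Sym2.eq_iff.1 he' with ⟨h1, _⟩ | ⟨h1, h2⟩
      · exact hij (hu h1).symm
      · exact hsep j i (h1.symm ▸ hw)
  have hedge : ∑ i : Fin n, (N i).card ≤ (starG u N hsep).edgeFinset.card :=
    hcardbi ▸ card_le_card hbiune
  calc (∑ i : Fin n, (N i).card) + 1 ≤ (starG u N hsep).edgeFinset.card + 1 := by omega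
    _ ≤ (Finset.image u Finset.univ ∪ T).card := hforest
    _ = n + T.card := hscard

end Helpers

theorem stmt_13 {V : Type*} [Fintype V] [DecidableEq V]
    (H : SimpleGraph V) [DecidableRel H.Adj] (r l : ℕ)
    (hrl : r ≤ l) (h3r : 2 * l + f (l - r) + 4 ≤ 3 * r)
    (U W : Finset V) (hdisj : Disjoint U W) (hcover : U ∪ W = Finset.univ)
    (hbip : ∀ x y, H.Adj x y → (x ∈ U ∧ y ∈ W) ∨ (x ∈ W ∧ y ∈ U))
    (hgirth : (2 * (f (l - r) : ℕ∞) + 2) ≤ H.egirth)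
    (hUdeg : ∀ u ∈ U, ((H.neighborFinset u) ∩ W).card = 2 * r - l - f (l - r))
    (u : Fin (f (l - r)) → V) (hu : Function.Injective u) (huU : ∀ i, u i ∈ U)
    (W₀ Wt : Finset V) (hW₀ : W₀ ⊆ Wt) (hWt : Wt ⊆ W)
    (hW₀card : W₀.card = l - r + f (l - r))
    (hinf : ∀ i : Fin (f (l - r)),
      (W₀.card : ℤ) - ((l : ℤ) - r) - (i : ℕ) ≤ (((H.neighborFinset (u i)) ∩ Wt).card : ℤ)) :
    (W₀.card : ℤ) + ((f (l - r) : ℤ) - 1) * ((W₀.card : ℤ) - ((l : ℤ) - r) - f (l - r)) <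
      (Wt.card : ℤ) := by
  classical
  have hg3 : 3 ≤ f (l - r) := f_three_le (l - r)
  have hkZ : ((l - r : ℕ) : ℤ) = (l : ℤ) - r := by
    push_cast [Nat.cast_sub hrl]; ring
  -- the stars
  have hsep : ∀ i j : Fin (f (l - r)), u i ∉ H.neighborFinset (u j) ∩ Wt := by
    intro i j hmem
    exact (Finset.disjoint_left.1 hdisj (huU i)) (hWt (mem_of_mem_inter_right hmem))
  have hadj : ∀ (i : Fin (f (l - r))) (w : V), w ∈ H.neighborFinset (u i) ∩ Wt → H.Adj (u i) w :=
    fun i w hw => (H.mem_neighborFinset _ _).1 (mem_of_mem_inter_left hw)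
  have huT : ∀ i : Fin (f (l - r)), u i ∉ Wt := by
    intro i hmem
    exact (Finset.disjoint_left.1 hdisj (huU i)) (hWt hmem)
  have hcount := star_count H (n := f (l - r)) (by omega) u hu
    (fun i => H.neighborFinset (u i) ∩ Wt) hsep hadj Wt
    (fun i => inter_subset_right) huT hgirth
  -- arithmetic
  have hW₀Z : (W₀.card : ℤ) = (l - r : ℕ) + (f (l - r) : ℤ) := by
    rw [hW₀card]; push_cast; ring
  have hi : ∀ i : Fin (f (l - r)),
      ((f (l - r) : ℤ)) - (i : ℕ) ≤ ((H.neighborFinset (u i) ∩ Wt).card : ℤ) := by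
    intro i
    have h1 := hinf i
    rw [hW₀Z, hkZ] at h1
    linarith
  have hs1 : (∑ i : Fin (f (l - r)), ((f (l - r) : ℤ) - ((i : ℕ) : ℤ)))
      ≤ ∑ i : Fin (f (l - r)), ((H.neighborFinset (u i) ∩ Wt).card : ℤ) :=
    Finset.sum_le_sum fun i _ => hi i
  have e1 : ∑ i : Fin (f (l - r)), ((f (l - r) : ℤ) - ((i : ℕ) : ℤ))
      = (f (l - r) : ℤ) * (f (l - r) : ℤ) - ∑ i ∈ Finset.range (f (l - r)), (i : ℤ) := by
    rw [Finset.sum_sub_distrib, Finset.sum_const, Finset.card_univ, Fintype.card_fin,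
      Fin.sum_univ_eq_sum_range (fun n => (n : ℤ)) (f (l - r))]
    simp [nsmul_eq_mul]
  have e2 : (∑ i ∈ Finset.range (f (l - r)), (i : ℤ)) * 2
      = (f (l - r) : ℤ) * ((f (l - r) : ℤ) - 1) := by
    have h1 := Finset.sum_range_id_mul_two (f (l - r))
    have h2 := congrArg (Nat.cast : ℕ → ℤ) h1
    push_cast [Nat.cast_sub (show 1 ≤ f (l - r) by omega)] at h2
    linarith [h2]
  have e3 : ((∑ i : Fin (f (l - r)), (H.neighborFinset (u i) ∩ Wt).card : ℕ) : ℤ)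
      = ∑ i : Fin (f (l - r)), ((H.neighborFinset (u i) ∩ Wt).card : ℤ) := by push_cast; rfl
  have hq := f_quad (l - r)
  have hqexp : 2 * ((l - r : ℕ) : ℤ) + 2
      ≤ (f (l - r) : ℤ) * (f (l - r) : ℤ) - 3 * (f (l - r) : ℤ) + 2 := by
    have hexp : ((f (l - r) : ℤ) - 1) * ((f (l - r) : ℤ) - 2)
        = (f (l - r) : ℤ) * (f (l - r) : ℤ) - 3 * (f (l - r) : ℤ) + 2 := by ring
    rw [hexp] at hq
    exact hq
  have hcountZ : ((∑ i : Fin (f (l - r)), (H.neighborFinset (u i) ∩ Wt).card : ℕ) : ℤ) + 1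
      ≤ (f (l - r) : ℤ) + (Wt.card : ℤ) := by exact_mod_cast hcount
  have hzero : (W₀.card : ℤ) - ((l : ℤ) - r) - (f (l - r) : ℤ) = 0 := by
    rw [hW₀Z, ← hkZ]; ring
  rw [hzero, mul_zero, add_zero, hW₀Z]
  rw [e3] at hcountZ
  linarith
end

section
/- Let r ≥ 2 and k ≥ 1, and let G be a graph on n vertices with minimum degree δ(G) ≥ ⌈n/(k+1)⌉ + (k+1)(r−1) − 1. Let A be any closed set for the r-neighbour bootstrap process with A ≠ V(G). Then |A| ≤ (k+1)(r−1) or |A| ≥ ⌈n/(k+1)⌉. -/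
open Finset

theorem stmt_15 {V : Type*} [Fintype V] [DecidableEq V]
    (G : SimpleGraph V) [DecidableRel G.Adj] (r k n : ℕ)
    (hr : 2 ≤ r) (hk : 1 ≤ k) (hn : Fintype.card V = n)
    (hdeg : (n + k) / (k + 1) + (k + 1) * (r - 1) - 1 ≤ G.minDegree)
    (A : Finset V) (hclosed : bootStep G r A = A) (hA : A ≠ Finset.univ) :
    A.card ≤ (k + 1) * (r - 1) ∨ (n + k) / (k + 1) ≤ A.card := by
  by_contra hcon
  push_neg at hcon
  obtain ⟨h1, h2⟩ := hcon
  set R := r - 1 with hR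
  set c := (n + k) / (k + 1) with hcdef
  set a := A.card with hadef
  set d := G.minDegree with hddef
  have hR1 : 1 ≤ R := by omega
  have han : a ≤ n := by
    rw [hadef, ← hn, ← Finset.card_univ]
    exact Finset.card_le_card (Finset.subset_univ A)
  have hnc : n ≤ (k + 1) * c := by
    have h3 : (k + 1) * c + (n + k) % (k + 1) = n + k := by
      rw [hcdef]; exact Nat.div_add_mod _ _
    have h4 := Nat.mod_lt (n + k) (show 0 < k + 1 by omega)
    omega
  have hclosed' : ∀ v ∈ Aᶜ, ((G.neighborFinset v) ∩ A).card ≤ R := by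
    intro v hv
    rw [Finset.mem_compl] at hv
    by_contra hcontra
    push_neg at hcontra
    have hv' : v ∈ bootStep G r A := by
      simp only [bootStep, Finset.mem_union, Finset.mem_filter, Finset.mem_univ, true_and]
      right; omega
    rw [hclosed] at hv'
    exact hv hv'
  have swap : ∑ u ∈ A, ((G.neighborFinset u) ∩ Aᶜ).card
            = ∑ v ∈ Aᶜ, ((G.neighborFinset v) ∩ A).card := by
    have e1 : ∀ (s : Finset V) (u : V),
        (G.neighborFinset u) ∩ s = s.filter (fun v => G.Adj u v) := by
      intro s u; ext v
      simp [SimpleGraph.mem_neighborFinset, and_comm]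
    simp only [e1, Finset.card_filter]
    rw [Finset.sum_comm]
    refine Finset.sum_congr rfl fun v _ => Finset.sum_congr rfl fun u _ => ?_
    simp [G.adj_comm]
  have lower : ∀ u ∈ A, d + 1 - a ≤ ((G.neighborFinset u) ∩ Aᶜ).card := by
    intro u hu
    have hsplit : (G.neighborFinset u ∩ A).card + (G.neighborFinset u \ A).card
        = (G.neighborFinset u).card := Finset.card_inter_add_card_sdiff _ _
    have hsd : G.neighborFinset u \ A = G.neighborFinset u ∩ Aᶜ := by
      ext v
      simp [SimpleGraph.mem_neighborFinset]
    have hdeg_u : d ≤ (G.neighborFinset u).card := G.minDegree_le_degree u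
    have hsub : G.neighborFinset u ∩ A ⊆ A.erase u := by
      intro v hv
      rw [Finset.mem_inter] at hv
      rw [Finset.mem_erase]
      exact ⟨((SimpleGraph.mem_neighborFinset _ _ _).1 hv.1).ne', hv.2⟩
    have hcard : (G.neighborFinset u ∩ A).card ≤ a - 1 := by
      have := Finset.card_le_card hsub
      rwa [Finset.card_erase_of_mem hu] at this
    have ha1 : 1 ≤ a := Finset.card_pos.2 ⟨u, hu⟩
    rw [hsd] at hsplit
    omega
  have lb : a * (d + 1 - a) ≤ ∑ u ∈ A, ((G.neighborFinset u) ∩ Aᶜ).card := by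
    have := Finset.card_nsmul_le_sum A _ _ lower
    simpa [smul_eq_mul, ← hadef] using this
  have ub : ∑ v ∈ Aᶜ, ((G.neighborFinset v) ∩ A).card ≤ (n - a) * R := by
    have := Finset.sum_le_card_nsmul Aᶜ _ R hclosed'
    have hcompl : Aᶜ.card = n - a := by rw [Finset.card_compl, hn, hadef]
    rw [hcompl, smul_eq_mul] at this
    exact this
  have main : a * (c + (k + 1) * R - a) ≤ (n - a) * R := by
    have hstep : c + (k + 1) * R - a ≤ d + 1 - a := by omega
    calc a * (c + (k + 1) * R - a) ≤ a * (d + 1 - a) := Nat.mul_le_mul_left a hstep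
      _ ≤ _ := le_trans lb (le_of_eq swap)
      _ ≤ (n - a) * R := ub
  have hac : a ≤ c + (k + 1) * R := by omega
  have hma : (k + 1) * R < a := h1
  have hca : a < c := h2
  zify [hac, han] at main
  have hma' : ((k : ℤ) + 1) * R < a := by exact_mod_cast hma
  have hca' : (a : ℤ) < c := by exact_mod_cast hca
  have hnc' : (n : ℤ) ≤ ((k : ℤ) + 1) * c := by exact_mod_cast hnc
  have hR1' : (1 : ℤ) ≤ R := by exact_mod_cast hR1
  have ha0 : (0 : ℤ) < a := by nlinarith
  nlinarith [mul_le_mul_of_nonneg_right (show (n : ℤ) - a ≤ ((k : ℤ) + 1) * c - a by linarith)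
      (show (0 : ℤ) ≤ R by linarith),
    mul_pos (show (0 : ℤ) < (a : ℤ) - ((k : ℤ) + 1) * R by linarith)
      (show (0 : ℤ) < (c : ℤ) - a by linarith),
    mul_pos ha0 (show (0 : ℤ) < R by linarith)]
end
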